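/- arXiv:1508.00481 — 5 statements merged into one kernel-verified Lean document; each statement's English description precedes it below -/
import Mathlib

section
/- Let m, n, d be positive integers and x ≥ 1 an integer, and let H = (h_{k,ℓ}) be an n × m matrix with entries in {0,1}. Then the following are equivalent: (i) the n rows of H are pairwise distinct and the set of rows of H is an (m,n,d,x) X-code; (ii) for every test output b ∈ {0,1}^n and every reference output c ∈ {0,1,X}^n such that the error set E = {k : c_k ≠ X and b_k ≠ c_k} satisfies 1 ≤ |E| ≤ d and the unknown set {k : c_k = X} has at most x elements, there exists a column index ℓ ∈ {1,…,m} such that (Σ_{k=1}^n b_k·h_{k,ℓ}) + (Σ_{k=1}^n c_k·h_{k,ℓ}) = 1, where all sums and products are computed in the X-algebra 𝕏₂. -/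
/-- An `(·,·,d,x)` X-code on coordinate set `ι`. -/
def IsXCode {ι : Type*} [Fintype ι] (d x : ℕ) (X : Finset (ι → ZMod 2)) : Prop :=
  ∀ S₁ S₂ : Finset (ι → ZMod 2), S₁ ⊆ X → S₂ ⊆ X → Disjoint S₁ S₂ →
    S₁.card ≤ x → 1 ≤ S₂.card → S₂.card ≤ d →
    ∃ j : ι, (∑ s ∈ S₂, s j) = 1 ∧ ∀ s ∈ S₁, s j = 0

/-- The X-algebra `𝕏₂` is `WithBot (ZMod 2)`, where the unknown logic value X is `⊥`.
Its addition (the `WithBot` addition, for which `⊥ + a = a + ⊥ = ⊥` and addition of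
non-`⊥` elements is performed in `𝔽₂`) is exactly the X-algebra addition.
This is the X-algebra multiplication of an element of `𝕏₂` by an element of `𝔽₂`:
`0·X = 0`, `1·X = X`, and products of elements of `𝔽₂` are computed in `𝔽₂`. -/
def xmul (a : WithBot (ZMod 2)) (h : ZMod 2) : WithBot (ZMod 2) :=
  if h = 0 then (0 : WithBot (ZMod 2)) else a

lemma zmod2_ne_zero {z : ZMod 2} (h : z ≠ 0) : z = 1 := by revert h; revert z; decide

lemma zmod2_self_add (z : ZMod 2) : z + z = 0 := by revert z; decide

lemma zmod2_add_ne {a b : ZMod 2} (h : a ≠ b) : a + b = 1 := by revert h; revert a b; decide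

lemma key {n m : ℕ} (H : Fin n → Fin m → ZMod 2) (b : Fin n → ZMod 2)
    (c : Fin n → WithBot (ZMod 2)) (ℓ : Fin m) :
    ((∑ k, ((b k * H k ℓ : ZMod 2) : WithBot (ZMod 2))) + ∑ k, xmul (c k) (H k ℓ) = 1)
      ↔ ((∀ k, c k = ⊥ → H k ℓ = 0) ∧
        (∑ k ∈ Finset.univ.filter
          (fun k => c k ≠ ⊥ ∧ c k ≠ ((b k : ZMod 2) : WithBot (ZMod 2))), H k ℓ) = 1) := by
  by_cases hU : ∀ k, c k = ⊥ → H k ℓ = 0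
  · have hx : ∀ k, xmul (c k) (H k ℓ)
        = (((c k).unbotD 0 * H k ℓ : ZMod 2) : WithBot (ZMod 2)) := by
      intro k
      rcases eq_or_ne (H k ℓ) 0 with h0 | h0
      · simp [xmul, h0]
      · have hc : c k ≠ ⊥ := fun hb => h0 (hU k hb)
        obtain ⟨z, hz⟩ := WithBot.ne_bot_iff_exists.mp hc
        simp [xmul, h0, zmod2_ne_zero h0, ← hz]
    simp only [hx, ← WithBot.coe_sum, ← WithBot.coe_add]
    rw [WithBot.coe_eq_one, ← Finset.sum_add_distrib]
    have hterm : ∀ k, b k * H k ℓ + (c k).unbotD 0 * H k ℓ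
        = if c k ≠ ⊥ ∧ c k ≠ ((b k : ZMod 2) : WithBot (ZMod 2)) then H k ℓ else 0 := by
      intro k
      rcases eq_or_ne (c k) ⊥ with hb | hb
      · simp [hb, hU k hb]
      · obtain ⟨z, hz⟩ := WithBot.ne_bot_iff_exists.mp hb
        by_cases he : c k = ((b k : ZMod 2) : WithBot (ZMod 2))
        · have hzb : z = b k := by rw [← hz] at he; exact_mod_cast he
          simp [hb, he, ← hz, hzb, ← add_mul, zmod2_self_add]
        · have hzb : z ≠ b k := fun h => he (by rw [← hz, h])
          rw [if_pos ⟨hb, he⟩, ← hz]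
          simp only [WithBot.unbotD_coe]
          rw [← add_mul, zmod2_add_ne (fun h => hzb h.symm), one_mul]
    simp only [hterm]
    rw [← Finset.sum_filter]
    exact (and_iff_right hU).symm
  · push_neg at hU
    obtain ⟨k, hk, hHk⟩ := hU
    have hxb : xmul (c k) (H k ℓ) = ⊥ := by simp [xmul, hHk, hk]
    have hsum : ∑ k, xmul (c k) (H k ℓ) = ⊥ := by
      rw [← Finset.add_sum_erase _ _ (Finset.mem_univ k), hxb, WithBot.bot_add]
    rw [hsum, WithBot.add_bot]
    constructor
    · intro h; exact absurd h (by simp)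
    · rintro ⟨h, -⟩; exact absurd (h k hk) hHk

/-- Proposition 1: an `n × m` binary matrix `H` has pairwise distinct rows forming an
`(m,n,d,x)` X-code iff for every test output `b ∈ {0,1}ⁿ` and reference output
`c ∈ {0,1,X}ⁿ` with between `1` and `d` error bits and at most `x` unknown logic values,
some column `ℓ` satisfies `(Σₖ bₖ·hₖℓ) + (Σₖ cₖ·hₖℓ) = 1` in the X-algebra `𝕏₂`. -/
theorem xcode_iff_xcompact (m n d x : ℕ) (hm : 0 < m) (hn : 0 < n) (hd : 0 < d)
    (hx : 1 ≤ x) (H : Fin n → Fin m → ZMod 2) :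
    (Function.Injective H ∧ IsXCode d x (Finset.univ.image H)) ↔
      (∀ (b : Fin n → ZMod 2) (c : Fin n → WithBot (ZMod 2)),
        1 ≤ (Finset.univ.filter fun k =>
              c k ≠ ⊥ ∧ c k ≠ ((b k : ZMod 2) : WithBot (ZMod 2))).card →
        (Finset.univ.filter fun k =>
              c k ≠ ⊥ ∧ c k ≠ ((b k : ZMod 2) : WithBot (ZMod 2))).card ≤ d →
        (Finset.univ.filter fun k => c k = ⊥).card ≤ x →
        ∃ ℓ : Fin m,
          (∑ k, ((b k * H k ℓ : ZMod 2) : WithBot (ZMod 2))) +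
            (∑ k, xmul (c k) (H k ℓ)) = 1) := by
  constructor
  · rintro ⟨hinj, hcode⟩ b c h1 h2 h3
    set E := Finset.univ.filter
      (fun k => c k ≠ ⊥ ∧ c k ≠ ((b k : ZMod 2) : WithBot (ZMod 2))) with hE
    set U := Finset.univ.filter (fun k => c k = ⊥) with hU
    have hdisj : Disjoint U E := by
      rw [Finset.disjoint_left]
      intro k hkU hkE
      rw [hU, Finset.mem_filter] at hkU
      rw [hE, Finset.mem_filter] at hkE
      exact hkE.2.1 hkU.2
    obtain ⟨j, hj1, hj2⟩ := hcode (U.image H) (E.image H)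
      (Finset.image_subset_image (Finset.subset_univ U))
      (Finset.image_subset_image (Finset.subset_univ E))
      ((Finset.disjoint_image hinj).mpr hdisj)
      (by rwa [Finset.card_image_of_injective _ hinj])
      (by rwa [Finset.card_image_of_injective _ hinj])
      (by rwa [Finset.card_image_of_injective _ hinj])
    refine ⟨j, (key H b c j).mpr ⟨?_, ?_⟩⟩
    · intro k hk
      exact hj2 (H k) (Finset.mem_image_of_mem H (by simp [hU, hk]))
    · rw [Finset.sum_image (fun a _ b _ h => hinj h)] at hj1
      exact hj1
  · intro hP
    have hinj : Function.Injective H := by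
      intro k k' hH
      by_contra hne
      set c : Fin n → WithBot (ZMod 2) := fun j =>
        if j = k then ((1 : ZMod 2) : WithBot (ZMod 2))
        else if j = k' then ⊥ else ((0 : ZMod 2) : WithBot (ZMod 2)) with hc
      have hEeq : (Finset.univ.filter fun j => c j ≠ ⊥ ∧
          c j ≠ (((fun _ => (0 : ZMod 2)) j : ZMod 2) : WithBot (ZMod 2))) = {k} := by
        ext j
        rcases eq_or_ne j k with rfl | hjk
        · simp [hc]
        · rcases eq_or_ne j k' with rfl | hjk'
          · simp [hc, hjk]
          · simp [hc, hjk, hjk']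
      have hUeq : (Finset.univ.filter fun j => c j = ⊥) = {k'} := by
        ext j
        rcases eq_or_ne j k with rfl | hjk
        · simp [hc, hne]
        · rcases eq_or_ne j k' with rfl | hjk'
          · simp [hc, hjk]
          · simp [hc, hjk, hjk']
      obtain ⟨ℓ, hℓ⟩ := hP (fun _ => 0) c (by rw [hEeq]; simp) (by rw [hEeq]; simpa)
        (by rw [hUeq]; simpa)
      rw [key] at hℓ
      obtain ⟨hbot, hsum⟩ := hℓ
      rw [hEeq, Finset.sum_singleton] at hsum
      have h0 : H k' ℓ = 0 := hbot k' (by simp [hc, Ne.symm hne])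
      rw [hH, h0] at hsum
      exact one_ne_zero hsum.symm
    refine ⟨hinj, ?_⟩
    intro S₁ S₂ hS₁ hS₂ hdisj hx1 hd1 hd2
    set c : Fin n → WithBot (ZMod 2) := fun k =>
      if H k ∈ S₂ then ((1 : ZMod 2) : WithBot (ZMod 2))
      else if H k ∈ S₁ then ⊥ else ((0 : ZMod 2) : WithBot (ZMod 2)) with hc
    set E := Finset.univ.filter (fun k => H k ∈ S₂) with hE
    set U := Finset.univ.filter (fun k => H k ∈ S₁) with hU
    have hcbot : ∀ k, c k = ⊥ ↔ H k ∈ S₁ := by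
      intro k
      rcases em (H k ∈ S₂) with h2 | h2
      · have h1 : H k ∉ S₁ := Finset.disjoint_right.mp hdisj h2
        simp [hc, h2, h1]
      · rcases em (H k ∈ S₁) with h1 | h1
        · simp [hc, h2, h1]
        · simp [hc, h2, h1]
    have hEeq : (Finset.univ.filter fun k => c k ≠ ⊥ ∧
        c k ≠ (((fun _ => (0 : ZMod 2)) k : ZMod 2) : WithBot (ZMod 2))) = E := by
      ext k
      rcases em (H k ∈ S₂) with h2 | h2
      · simp [hE, hc, h2]
      · rcases em (H k ∈ S₁) with h1 | h1
        · simp [hE, hc, h2, h1]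
        · simp [hE, hc, h2, h1]
    have hUeq : (Finset.univ.filter fun k => c k = ⊥) = U := by
      ext k; simp [hU, hcbot k]
    have himg2 : E.image H = S₂ := by
      ext s
      simp only [hE, Finset.mem_image, Finset.mem_filter, Finset.mem_univ, true_and]
      constructor
      · rintro ⟨k, hk, rfl⟩; exact hk
      · intro hs
        obtain ⟨k, -, rfl⟩ := Finset.mem_image.mp (hS₂ hs)
        exact ⟨k, hs, rfl⟩
    have himg1 : U.image H = S₁ := by
      ext s
      simp only [hU, Finset.mem_image, Finset.mem_filter, Finset.mem_univ, true_and]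
      constructor
      · rintro ⟨k, hk, rfl⟩; exact hk
      · intro hs
        obtain ⟨k, -, rfl⟩ := Finset.mem_image.mp (hS₁ hs)
        exact ⟨k, hs, rfl⟩
    have hcardE : E.card = S₂.card := by
      rw [← himg2, Finset.card_image_of_injective _ hinj]
    have hcardU : U.card = S₁.card := by
      rw [← himg1, Finset.card_image_of_injective _ hinj]
    obtain ⟨ℓ, hℓ⟩ := hP (fun _ => 0) c (by rw [hEeq]; omega) (by rw [hEeq]; omega)
      (by rw [hUeq]; omega)
    rw [key] at hℓ
    obtain ⟨hbot, hsum⟩ := hℓ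
    rw [hEeq] at hsum
    refine ⟨ℓ, ?_, ?_⟩
    · rw [← himg2, Finset.sum_image (fun a _ b _ h => hinj h)]
      exact hsum
    · intro s hs
      obtain ⟨k, -, rfl⟩ := Finset.mem_image.mp (hS₁ hs)
      exact hbot k ((hcbot k).mpr hs)
end

section
/- Let m, n, d be positive integers and x ≥ 1 an integer. Every (m,n,d,x) X-code is also an (m,n,d+1,x-1) X-code. -/
/-- Every `(m,n,d,x)` X-code with `x ≥ 1` is also an `(m,n,d+1,x-1)` X-code. -/
theorem xcode_incr_d_decr_x (m n d x : ℕ) (hm : 0 < m) (hn : 0 < n) (hd : 0 < d)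
    (hx : 1 ≤ x) (X : Finset (Fin m → ZMod 2)) (hcard : X.card = n)
    (hX : IsXCode d x X) : IsXCode (d + 1) (x - 1) X := by
  intro S₁ S₂ h₁ h₂ hdisj hc₁ hc₂ hc₃
  rcases le_or_gt S₂.card d with hle | hlt
  · exact hX S₁ S₂ h₁ h₂ hdisj (hc₁.trans (Nat.sub_le x 1)) hc₂ hle
  · -- S₂.card = d + 1
    have hcard₂ : S₂.card = d + 1 := le_antisymm hc₃ hlt
    obtain ⟨v, hv⟩ := Finset.card_pos.mp (by omega : 0 < S₂.card)
    set S₂' := S₂.erase v with hS₂'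
    have hvS₁ : v ∉ S₁ := fun h => (Finset.disjoint_left.mp hdisj h) hv
    have hdisj' : Disjoint (insert v S₁) S₂' := by
      rw [Finset.disjoint_left]
      intro a ha ha'
      rcases Finset.mem_insert.mp ha with rfl | ha
      · exact Finset.notMem_erase a S₂ ha'
      · exact Finset.disjoint_left.mp hdisj ha (Finset.mem_of_mem_erase ha')
    have hcardins : (insert v S₁).card ≤ x := by
      rw [Finset.card_insert_of_notMem hvS₁]; omega
    have hcard' : S₂'.card = d := by
      rw [hS₂', Finset.card_erase_of_mem hv, hcard₂]; omega
    obtain ⟨j, hj1, hj2⟩ := hX (insert v S₁) S₂'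
      (Finset.insert_subset (h₂ hv) h₁) ((Finset.erase_subset v S₂).trans h₂) hdisj'
      hcardins (by omega) (by omega)
    refine ⟨j, ?_, fun s hs => hj2 s (Finset.mem_insert_of_mem hs)⟩
    have hvj : v j = 0 := hj2 v (Finset.mem_insert_self v S₁)
    rw [← Finset.add_sum_erase _ _ hv, hvj, zero_add]
    exact hj1
end

section
/- Let (V,ℬ) be a 5-even-free Steiner triple system of order v (so |ℬ| = v(v-1)/6). Then the set of indicator vectors of the blocks of ℬ is a (v, v(v-1)/6, 3, 1) X-code of constant weight three, and it is moreover a (v, v(v-1)/6, 5, 0) X-code. -/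
/-- The weight of a vector: its number of nonzero coordinates. -/
def wt {ι : Type*} [Fintype ι] (s : ι → ZMod 2) : ℕ :=
  (Finset.univ.filter fun j => s j ≠ 0).card

/-- A configuration is even if every point lies in an even number of its blocks. -/
def IsEvenConfig {V : Type*} [DecidableEq V] (C : Finset (Finset V)) : Prop :=
  ∀ p : V, Even (C.filter fun b => p ∈ b).card

open Finset

variable {v : ℕ}

def ind (b : Finset (Fin v)) : Fin v → ZMod 2 := fun p => if p ∈ b then 1 else 0

def cnt (C : Finset (Finset (Fin v))) (j : Fin v) : ℕ := (C.filter (fun b => j ∈ b)).card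

lemma ind_inj : Function.Injective (ind (v := v)) := by
  intro a b h
  ext p
  have hp := congrFun h p
  by_cases h1 : p ∈ a <;> by_cases h2 : p ∈ b <;> simp_all [ind]

lemma cast_eq_one_iff (n : ℕ) : ((n : ZMod 2) = 1) ↔ Odd n := by
  rw [Nat.odd_iff, show ((n : ZMod 2)) = ((n % 2 : ℕ) : ZMod 2) from (ZMod.natCast_mod n 2).symm]
  rcases Nat.mod_two_eq_zero_or_one n with h | h <;> rw [h] <;> simp <;> decide

lemma sum_ind_eq (C : Finset (Finset (Fin v))) (j : Fin v) :
    (∑ b ∈ C, ind b j) = ((cnt C j : ℕ) : ZMod 2) := by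
  simp [ind, cnt, Finset.sum_boole]

lemma cnt_erase (C : Finset (Finset (Fin v))) {b1 : Finset (Fin v)} (hb1 : b1 ∈ C) (j : Fin v) :
    cnt (C.erase b1) j = if j ∈ b1 then cnt C j - 1 else cnt C j := by
  unfold cnt
  rw [Finset.filter_erase]
  by_cases h : j ∈ b1
  · rw [if_pos h, Finset.card_erase_of_mem (mem_filter.2 ⟨hb1, h⟩)]
  · have hb : b1 ∉ C.filter (fun b => j ∈ b) := fun hc => h (mem_filter.1 hc).2
    rw [if_neg h, Finset.erase_eq_of_notMem hb]

lemma inter_card_le (B : Finset (Finset (Fin v)))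
    (hsts : ∀ p : Finset (Fin v), p.card = 2 → ∃! b, b ∈ B ∧ p ⊆ b)
    {b1 b2 : Finset (Fin v)} (h1 : b1 ∈ B) (h2 : b2 ∈ B) (hne : b1 ≠ b2) :
    (b1 ∩ b2).card ≤ 1 := by
  by_contra h
  push_neg at h
  obtain ⟨p, hp, hpc⟩ := Finset.exists_subset_card_eq h
  obtain ⟨b, hb, hu⟩ := hsts p hpc
  exact hne ((hu b1 ⟨h1, hp.trans inter_subset_left⟩).trans
    (hu b2 ⟨h2, hp.trans inter_subset_right⟩).symm)

lemma two_blocks (B : Finset (Finset (Fin v)))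
    (hblock : ∀ b ∈ B, b.card = 3)
    (hsts : ∀ p : Finset (Fin v), p.card = 2 → ∃! b, b ∈ B ∧ p ⊆ b)
    {b1 b2 : Finset (Fin v)} (h1 : b1 ∈ B) (h2 : b2 ∈ B) (hne : b1 ≠ b2) :
    4 ≤ (univ.filter (fun j => Odd (cnt {b1, b2} j))).card := by
  have hD : (b1 \ b2) ∪ (b2 \ b1) ⊆ univ.filter (fun j => Odd (cnt {b1, b2} j)) := by
    intro j hj
    simp only [mem_union, mem_sdiff] at hj
    simp only [mem_filter, mem_univ, true_and]
    rcases hj with ⟨hj1, hj2⟩ | ⟨hj1, hj2⟩ <;>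
      simp [cnt, Finset.filter_insert, Finset.filter_singleton, hj1, hj2, hne, Nat.odd_iff]
  have hd : Disjoint (b1 \ b2) (b2 \ b1) := disjoint_sdiff_sdiff
  have hi : (b1 ∩ b2).card ≤ 1 := inter_card_le B hsts h1 h2 hne
  have e1 : (b1 \ b2).card = b1.card - (b1 ∩ b2).card := by
    rw [← Finset.sdiff_inter_self_left b1 b2, Finset.card_sdiff_of_subset inter_subset_left]
  have e2 : (b2 \ b1).card = b2.card - (b2 ∩ b1).card := by
    rw [← Finset.sdiff_inter_self_left b2 b1, Finset.card_sdiff_of_subset inter_subset_left]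
  have hcard : 4 ≤ ((b1 \ b2) ∪ (b2 \ b1)).card := by
    rw [Finset.card_union_of_disjoint hd, e1, e2, hblock b1 h1, hblock b2 h2,
      Finset.inter_comm b2 b1]
    omega
  exact hcard.trans (Finset.card_le_card hD)

lemma key_s7 (B : Finset (Finset (Fin v)))
    (hblock : ∀ b ∈ B, b.card = 3)
    (hsts : ∀ p : Finset (Fin v), p.card = 2 → ∃! b, b ∈ B ∧ p ⊆ b)
    (h5 : ∀ C ⊆ B, C.Nonempty → C.card ≤ 5 → ¬ IsEvenConfig C)
    (C : Finset (Finset (Fin v))) (a : Finset (Fin v))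
    (hC : C ⊆ B) (ha : a ∈ B) (haC : a ∉ C) (hne : C.Nonempty) (h3 : C.card ≤ 3) :
    ∃ j, Odd (cnt C j) ∧ j ∉ a := by
  by_contra hcon
  push_neg at hcon
  set O := univ.filter (fun j => Odd (cnt C j)) with hOdef
  have hOmem : ∀ j, j ∈ O ↔ Odd (cnt C j) := fun j => by simp [hOdef]
  have hOa : O ⊆ a := fun j hj => hcon j ((hOmem j).1 hj)
  have hacard : a.card = 3 := hblock a ha
  have hOcard : O.card ≤ 3 := hacard ▸ Finset.card_le_card hOa
  have hc1 : 1 ≤ C.card := Finset.card_pos.2 hne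
  have hcc : C.card = 1 ∨ C.card = 2 ∨ C.card = 3 := by omega
  rcases hcc with h1 | h2 | h3'
  · -- one block
    obtain ⟨b, rfl⟩ := Finset.card_eq_one.1 h1
    have hbB : b ∈ B := hC (mem_singleton_self b)
    have hba : b ⊆ a := by
      intro j hjb
      exact hcon j (by simp [cnt, Finset.filter_singleton, hjb, Nat.odd_iff])
    have : b = a := Finset.eq_of_subset_of_card_le hba (by rw [hacard, hblock b hbB])
    exact haC (this ▸ mem_singleton_self b)
  · -- two blocks
    obtain ⟨b1, b2, hne12, rfl⟩ := Finset.card_eq_two.1 h2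
    have h4 : 4 ≤ O.card :=
      two_blocks B hblock hsts (hC (by simp)) (hC (by simp)) hne12
    omega
  · -- three blocks
    by_cases hO0 : O = ∅
    · refine h5 C hC hne (by omega) (fun p => ?_)
      have hp : p ∉ O := hO0 ▸ notMem_empty p
      rw [hOmem] at hp
      exact Nat.not_odd_iff_even.1 hp
    have hOne : O.Nonempty := Finset.nonempty_iff_ne_empty.2 hO0
    by_cases hO3 : O.card = 3
    · -- O = a, add a to C
      have hOa' : O = a := Finset.eq_of_subset_of_card_le hOa (by omega)
      refine h5 (insert a C) (Finset.insert_subset ha hC) ⟨a, mem_insert_self a C⟩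
        (by rw [Finset.card_insert_of_notMem haC]; omega) (fun p => ?_)
      have hcnt : ((insert a C).filter fun b => p ∈ b).card
          = (if p ∈ a then 1 else 0) + cnt C p := by
        rw [Finset.filter_insert]
        by_cases hpa : p ∈ a
        · rw [if_pos hpa, if_pos hpa,
            Finset.card_insert_of_notMem (fun hc => haC (Finset.mem_filter.1 hc).1)]
          unfold cnt
          omega
        · rw [if_neg hpa, if_neg hpa]
          unfold cnt
          omega
      rw [hcnt]
      by_cases hpa : p ∈ a
      · have hodd : Odd (cnt C p) := (hOmem p).1 (hOa' ▸ hpa)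
        rw [if_pos hpa]
        rw [Nat.odd_iff] at hodd
        rw [Nat.even_iff]
        omega
      · have hev : ¬ Odd (cnt C p) := fun h => hpa (hOa ((hOmem p).2 h))
        rw [if_neg hpa]
        rw [Nat.not_odd_iff_even] at hev
        rw [Nat.even_iff] at hev ⊢
        omega
    · -- 1 ≤ O.card ≤ 2
      obtain ⟨p, hpO⟩ := hOne
      have hodd : Odd (cnt C p) := (hOmem p).1 hpO
      have hpos : 0 < cnt C p := by
        rcases hodd with ⟨k, hk⟩; omega
      obtain ⟨b1, hb1f⟩ := Finset.card_pos.1 hpos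
      have hb1C : b1 ∈ C := (Finset.mem_filter.1 hb1f).1
      have hpb1 : p ∈ b1 := (Finset.mem_filter.1 hb1f).2
      set C' := C.erase b1 with hC'def
      have hC'c : C'.card = 2 := by
        rw [hC'def, Finset.card_erase_of_mem hb1C]; omega
      obtain ⟨b2, b3, hne23, hC'eq⟩ := Finset.card_eq_two.1 hC'c
      have hb2B : b2 ∈ B := hC (Finset.erase_subset _ _ (hC'eq ▸ (by simp : b2 ∈ ({b2, b3} : Finset _))))
      have hb3B : b3 ∈ B := hC (Finset.erase_subset _ _ (hC'eq ▸ (by simp : b3 ∈ ({b2, b3} : Finset _))))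
      have h4 : 4 ≤ (univ.filter (fun j => Odd (cnt C' j))).card := by
        rw [hC'eq]
        exact two_blocks B hblock hsts hb2B hb3B hne23
      -- O' ⊆ (O ∪ b1).erase p
      have hsub : (univ.filter (fun j => Odd (cnt C' j))) ⊆ (O ∪ b1).erase p := by
        intro j hj
        have hoddj : Odd (cnt C' j) := (Finset.mem_filter.1 hj).2
        have hcntj : cnt C' j = if j ∈ b1 then cnt C j - 1 else cnt C j :=
          cnt_erase C hb1C j
        rw [Finset.mem_erase, Finset.mem_union]
        constructor
        · rintro rfl
          rw [if_pos hpb1] at hcntj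
          rw [Nat.odd_iff] at hodd hoddj
          omega
        · by_cases hjb1 : j ∈ b1
          · exact Or.inr hjb1
          · rw [if_neg hjb1] at hcntj
            exact Or.inl ((hOmem j).2 (hcntj ▸ hoddj))
      have hcard' : ((O ∪ b1).erase p).card ≤ 3 := by
        have hu : (O ∪ b1).card + (O ∩ b1).card = O.card + b1.card :=
          Finset.card_union_add_card_inter O b1
        have hpi : p ∈ O ∩ b1 := Finset.mem_inter.2 ⟨hpO, hpb1⟩
        have h1le : 1 ≤ (O ∩ b1).card := Finset.card_pos.2 ⟨p, hpi⟩
        have hb1c : b1.card = 3 := hblock b1 (hC hb1C)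
        have hpe : p ∈ O ∪ b1 := Finset.mem_union_left _ hpO
        rw [Finset.card_erase_of_mem hpe]
        omega
      have := (h4.trans (Finset.card_le_card hsub)).trans hcard'
      omega

lemma card_B (B : Finset (Finset (Fin v)))
    (hblock : ∀ b ∈ B, b.card = 3)
    (hsts : ∀ p : Finset (Fin v), p.card = 2 → ∃! b, b ∈ B ∧ p ⊆ b) :
    B.card = v * (v - 1) / 6 := by
  classical
  set P := Finset.powersetCard 2 (univ : Finset (Fin v)) with hP
  set f : Finset (Fin v) → Finset (Fin v) :=
    fun p => if h : p.card = 2 then (hsts p h).choose else ∅ with hfdef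
  have hfspec : ∀ (p : Finset (Fin v)) (h : p.card = 2),
      (f p ∈ B ∧ p ⊆ f p) ∧ ∀ y, y ∈ B ∧ p ⊆ y → y = f p := by
    intro p h
    rw [hfdef]
    simp only [dif_pos h]
    exact ⟨(hsts p h).choose_spec.1, fun y hy => (hsts p h).choose_spec.2 y hy⟩
  have hfB : ∀ p ∈ P, f p ∈ B := by
    intro p hp
    exact (hfspec p (Finset.mem_powersetCard.1 hp).2).1.1
  have hfiber : ∀ b ∈ B, P.filter (fun p => f p = b) = Finset.powersetCard 2 b := by
    intro b hb
    ext q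
    simp only [Finset.mem_filter, Finset.mem_powersetCard, hP]
    constructor
    · rintro ⟨⟨-, hq2⟩, hfq⟩
      exact ⟨hfq ▸ (hfspec q hq2).1.2, hq2⟩
    · rintro ⟨hqb, hq2⟩
      exact ⟨⟨Finset.subset_univ q, hq2⟩, ((hfspec q hq2).2 b ⟨hb, hqb⟩).symm⟩
  have h1 : P.card = ∑ b ∈ B, (Finset.powersetCard 2 b).card := by
    rw [Finset.card_eq_sum_card_fiberwise hfB]
    exact Finset.sum_congr rfl (fun b hb => by rw [hfiber b hb])
  have h2 : ∀ b ∈ B, (Finset.powersetCard 2 b).card = 3 := by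
    intro b hb
    rw [Finset.card_powersetCard, hblock b hb]
    decide
  rw [Finset.sum_congr rfl h2, Finset.sum_const, smul_eq_mul] at h1
  have hPc : P.card = v.choose 2 := by
    rw [hP, Finset.card_powersetCard, Finset.card_univ, Fintype.card_fin]
  have hch : 2 * v.choose 2 = v * (v - 1) := by
    rcases Nat.eq_zero_or_pos v with rfl | hv
    · simp
    · obtain ⟨n, rfl⟩ := Nat.exists_eq_succ_of_ne_zero hv.ne'
      rw [Nat.choose_two_right, Nat.succ_sub_one]
      have hdvd : 2 ∣ (n + 1) * n := by
        have he := Nat.even_mul_succ_self n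
        rw [mul_comm] at he
        exact he.two_dvd
      exact Nat.mul_div_cancel' hdvd
  set m := v * (v - 1) with hm
  omega

lemma xcode_setup (B : Finset (Finset (Fin v))) (S : Finset (Fin v → ZMod 2))
    (hS : S ⊆ B.image ind) :
    ∃ C, C ⊆ B ∧ C.image ind = S ∧ C.card = S.card := by
  classical
  refine ⟨B.filter (fun b => ind b ∈ S), Finset.filter_subset _ _, ?_⟩
  have himg : (B.filter (fun b => ind b ∈ S)).image ind = S := by
    ext s
    simp only [Finset.mem_image, Finset.mem_filter]
    constructor
    · rintro ⟨b, ⟨hb, hbS⟩, rfl⟩; exact hbS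
    · intro hs
      obtain ⟨b, hb, rfl⟩ := Finset.mem_image.1 (hS hs)
      exact ⟨b, ⟨hb, hs⟩, rfl⟩
  refine ⟨himg, ?_⟩
  calc (B.filter (fun b => ind b ∈ S)).card
      = ((B.filter (fun b => ind b ∈ S)).image ind).card :=
        (Finset.card_image_of_injective _ ind_inj).symm
    _ = S.card := by rw [himg]

lemma sum_transfer (C : Finset (Finset (Fin v))) (j : Fin v) :
    (∑ s ∈ C.image ind, s j) = ((cnt C j : ℕ) : ZMod 2) := by
  rw [Finset.sum_image (fun a _ b _ h => ind_inj h)]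
  exact sum_ind_eq C j

/-- Lemma 1: the block indicator vectors of a 5-even-free Steiner triple system of
order `v` form a `(v, v(v-1)/6, 3, 1)` X-code of constant weight three which is also
a `(v, v(v-1)/6, 5, 0)` X-code. -/
theorem fiveEvenFree_sts_xcode (v : ℕ) (B : Finset (Finset (Fin v)))
    (hblock : ∀ b ∈ B, b.card = 3)
    (hsts : ∀ p : Finset (Fin v), p.card = 2 → ∃! b, b ∈ B ∧ p ⊆ b)
    (h5 : ∀ C ⊆ B, C.Nonempty → C.card ≤ 5 → ¬ IsEvenConfig C) :
    (B.image fun b => fun p : Fin v => if p ∈ b then (1 : ZMod 2) else 0).card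
        = v * (v - 1) / 6 ∧
      (∀ s ∈ B.image fun b => fun p : Fin v => if p ∈ b then (1 : ZMod 2) else 0,
        wt s = 3) ∧
      IsXCode 3 1 (B.image fun b => fun p : Fin v => if p ∈ b then (1 : ZMod 2) else 0) ∧
      IsXCode 5 0 (B.image fun b => fun p : Fin v => if p ∈ b then (1 : ZMod 2) else 0) := by
  have himage : (B.image fun b => fun p : Fin v => if p ∈ b then (1 : ZMod 2) else 0)
      = B.image ind := rfl
  rw [himage]
  refine ⟨?_, ?_, ?_, ?_⟩
  · rw [Finset.card_image_of_injective _ ind_inj]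
    exact card_B B hblock hsts
  · intro s hs
    obtain ⟨b, hb, rfl⟩ := Finset.mem_image.1 hs
    have : Finset.univ.filter (fun j => ind b j ≠ 0) = b := by
      ext j
      simp only [Finset.mem_filter, Finset.mem_univ, true_and, ind]
      by_cases hj : j ∈ b <;> simp [hj]
    rw [wt, this]
    exact hblock b hb
  · -- (3,1)-code
    intro S₁ S₂ hS₁ hS₂ hdisj h1 h2lo h2hi
    obtain ⟨C, hCB, himg, hcard⟩ := xcode_setup B S₂ hS₂
    have hCne : C.Nonempty := Finset.card_pos.1 (by omega)
    have hC3 : C.card ≤ 3 := by omega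
    rcases Finset.eq_empty_or_nonempty S₁ with rfl | hS₁ne
    · have hnev := h5 C hCB hCne (by omega)
      obtain ⟨p, hp⟩ := not_forall.1 hnev
      refine ⟨p, ?_, by simp⟩
      rw [← himg, sum_transfer, cast_eq_one_iff]
      exact Nat.not_even_iff_odd.1 hp
    · have hS₁card : S₁.card = 1 := le_antisymm h1 (Finset.card_pos.2 hS₁ne)
      obtain ⟨t, rfl⟩ := Finset.card_eq_one.1 hS₁card
      obtain ⟨a, haB, rfl⟩ := Finset.mem_image.1 (hS₁ (Finset.mem_singleton_self t))
      have haC : a ∉ C := by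
        intro haC
        have : ind a ∈ S₂ := himg ▸ Finset.mem_image_of_mem ind haC
        exact Finset.disjoint_left.1 hdisj (Finset.mem_singleton_self _) this
      obtain ⟨j, hjodd, hja⟩ := key_s7 B hblock hsts h5 C a hCB haB haC hCne hC3
      refine ⟨j, ?_, ?_⟩
      · rw [← himg, sum_transfer, cast_eq_one_iff]
        exact hjodd
      · intro s hs
        rw [Finset.mem_singleton] at hs
        subst hs
        simp [ind, hja]
  · -- (5,0)-code
    intro S₁ S₂ hS₁ hS₂ hdisj h1 h2lo h2hi
    obtain ⟨C, hCB, himg, hcard⟩ := xcode_setup B S₂ hS₂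
    have hCne : C.Nonempty := Finset.card_pos.1 (by omega)
    have hS₁e : S₁ = ∅ := Finset.card_eq_zero.1 (le_antisymm h1 (Nat.zero_le _))
    have hnev := h5 C hCB hCne (by omega)
    obtain ⟨p, hp⟩ := not_forall.1 hnev
    refine ⟨p, ?_, by simp [hS₁e]⟩
    rw [← himg, sum_transfer, cast_eq_one_iff]
    exact Nat.not_even_iff_odd.1 hp
end

section
/- Let v ≥ 7 and let (V,ℬ) be a 4-even-free Steiner triple system of order v, and set n = v(v-1)/6 = |ℬ|. Let F be the set of pairs ({A,B},{C,D}) consisting of two disjoint unordered pairs of distinct blocks of ℬ such that the symmetric difference C △ D is contained in A ∪ B (this is exactly the condition under which the X-code of block indicator vectors fails to detect the two errors C, D in the presence of the two unknowns A, B). Then, as rational numbers, |F| / (C(n,2)·C(n-2,2)) = 1296 / ((v+2)(v+3)(v-4)(v²-v-18)). -/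
section helpers
variable {v : ℕ} {B : Finset (Finset (Fin v))}

variable {v : ℕ} {B : Finset (Finset (Fin v))}

lemma blocks_eq (hsts : ∀ p : Finset (Fin v), p.card = 2 → ∃! b, b ∈ B ∧ p ⊆ b)
    {b c : Finset (Fin v)} (hb : b ∈ B) (hc : c ∈ B) {x y : Fin v} (hxy : x ≠ y)
    (hxb : x ∈ b) (hyb : y ∈ b) (hxc : x ∈ c) (hyc : y ∈ c) : b = c := by
  obtain ⟨e, -, hu⟩ := hsts {x, y} (Finset.card_pair hxy)
  have h1 := hu b ⟨hb, by intro z hz; simp only [Finset.mem_insert, Finset.mem_singleton] at hz; rcases hz with rfl|rfl <;> assumption⟩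
  have h2 := hu c ⟨hc, by intro z hz; simp only [Finset.mem_insert, Finset.mem_singleton] at hz; rcases hz with rfl|rfl <;> assumption⟩
  rw [h1, h2]

lemma exists_block (hsts : ∀ p : Finset (Fin v), p.card = 2 → ∃! b, b ∈ B ∧ p ⊆ b)
    {x y : Fin v} (hxy : x ≠ y) : ∃ e ∈ B, x ∈ e ∧ y ∈ e := by
  obtain ⟨e, ⟨heB, hsub⟩, -⟩ := hsts {x, y} (Finset.card_pair hxy)
  exact ⟨e, heB, hsub (by simp), hsub (by simp)⟩

lemma rep_count (hblock : ∀ b ∈ B, b.card = 3)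
    (hsts : ∀ p : Finset (Fin v), p.card = 2 → ∃! b, b ∈ B ∧ p ⊆ b) (x : Fin v) :
    2 * (B.filter (fun b => x ∈ b)).card = v - 1 := by
  have key : (Finset.univ.erase x) = (B.filter (fun b => x ∈ b)).biUnion (fun b => b.erase x) := by
    ext y
    simp only [Finset.mem_erase, Finset.mem_univ, and_true, Finset.mem_biUnion, Finset.mem_filter]
    constructor
    · intro hy
      obtain ⟨e, heB, hxe, hye⟩ := exists_block hsts (Ne.symm hy)
      exact ⟨e, ⟨heB, hxe⟩, hy, hye⟩
    · rintro ⟨b, ⟨-, -⟩, hyx, -⟩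
      exact hyx
  have hdisj : ∀ b ∈ B.filter (fun b => x ∈ b), ∀ c ∈ B.filter (fun b => x ∈ b), b ≠ c →
      Disjoint (b.erase x) (c.erase x) := by
    intro b hb c hc hbc
    rw [Finset.mem_filter] at hb hc
    rw [Finset.disjoint_left]
    intro y hyb hyc
    rw [Finset.mem_erase] at hyb hyc
    exact hbc (blocks_eq hsts hb.1 hc.1 (Ne.symm hyb.1) hb.2 hyb.2 hc.2 hyc.2)
  have h1 : (Finset.univ.erase x).card = v - 1 := by
    rw [Finset.card_erase_of_mem (Finset.mem_univ x), Finset.card_univ, Fintype.card_fin]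
  rw [key, Finset.card_biUnion hdisj] at h1
  have h2 : ∀ b ∈ B.filter (fun b => x ∈ b), (b.erase x).card = 2 := by
    intro b hb
    rw [Finset.mem_filter] at hb
    rw [Finset.card_erase_of_mem hb.2, hblock b hb.1]
  rw [Finset.sum_congr rfl h2, Finset.sum_const, smul_eq_mul] at h1
  omega

lemma six_n (hblock : ∀ b ∈ B, b.card = 3)
    (hsts : ∀ p : Finset (Fin v), p.card = 2 → ∃! b, b ∈ B ∧ p ⊆ b) :
    6 * B.card = v * (v - 1) := by
  have key : (Finset.univ : Finset (Fin v)).powersetCard 2 = B.biUnion (fun b => b.powersetCard 2) := by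
    ext p
    simp only [Finset.mem_powersetCard, Finset.mem_biUnion]
    constructor
    · rintro ⟨-, h2⟩
      obtain ⟨e, ⟨heB, hpe⟩, -⟩ := hsts p h2
      exact ⟨e, heB, hpe, h2⟩
    · rintro ⟨b, -, -, h2⟩
      exact ⟨Finset.subset_univ p, h2⟩
  have hdisj : ∀ b ∈ B, ∀ c ∈ B, b ≠ c → Disjoint (b.powersetCard 2) (c.powersetCard 2) := by
    intro b hb c hc hbc
    rw [Finset.disjoint_left]
    intro p hpb hpc
    rw [Finset.mem_powersetCard] at hpb hpc
    obtain ⟨y, z, hyz, rfl⟩ := Finset.card_eq_two.mp hpb.2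
    have hyb := hpb.1 (Finset.mem_insert_self y {z})
    have hzb := hpb.1 (Finset.mem_insert_of_mem (Finset.mem_singleton_self z))
    have hyc := hpc.1 (Finset.mem_insert_self y {z})
    have hzc := hpc.1 (Finset.mem_insert_of_mem (Finset.mem_singleton_self z))
    exact hbc (blocks_eq hsts hb hc hyz hyb hzb hyc hzc)
  have h1 : ((Finset.univ : Finset (Fin v)).powersetCard 2).card = v.choose 2 := by
    rw [Finset.card_powersetCard, Finset.card_univ, Fintype.card_fin]
  rw [key, Finset.card_biUnion hdisj] at h1
  have h2 : ∀ b ∈ B, (b.powersetCard 2).card = 3 := by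
    intro b hb
    rw [Finset.card_powersetCard, hblock b hb]
    decide
  rw [Finset.sum_congr rfl h2, Finset.sum_const, smul_eq_mul] at h1
  have hdvd : 2 ∣ v * (v - 1) := by
    rcases Nat.even_or_odd v with h | h
    · exact Dvd.dvd.mul_right h.two_dvd _
    · exact Dvd.dvd.mul_left (Nat.Odd.sub_odd h odd_one).two_dvd _
  have := Nat.choose_two_right v
  omega


lemma no_disjoint_cover (hblock : ∀ b ∈ B, b.card = 3)
    (h4 : ∀ C ⊆ B, C.Nonempty → C.card ≤ 4 → ¬ IsEvenConfig C)
    {A A' C D : Finset (Fin v)} (hA : A ∈ B) (hA' : A' ∈ B) (hC : C ∈ B) (hD : D ∈ B)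
    (hAA' : A ≠ A') (hCD : C ≠ D) (hAC : A ≠ C) (hAD : A ≠ D) (hA'C : A' ≠ C) (hA'D : A' ≠ D)
    (hdisj : ∀ p : Fin v, p ∈ C → p ∈ D → False)
    (hcov : C ∪ D ⊆ A ∪ A') : False := by
  have hCDcard : (C ∪ D).card = 6 := by
    rw [Finset.card_union_of_disjoint (Finset.disjoint_left.mpr hdisj), hblock C hC, hblock D hD]
  have hle : (A ∪ A').card ≤ 6 := by
    have := Finset.card_union_le A A'
    rw [hblock A hA, hblock A' hA'] at this
    omega
  have heq : C ∪ D = A ∪ A' := Finset.eq_of_subset_of_card_le hcov (by omega)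
  have hAdisj : ∀ p : Fin v, p ∈ A → p ∈ A' → False := by
    have h := Finset.card_union_add_card_inter A A'
    rw [← heq, hCDcard, hblock A hA, hblock A' hA'] at h
    have : A ∩ A' = ∅ := Finset.card_eq_zero.mp (by omega)
    intro p hp hp'
    have : p ∈ A ∩ A' := Finset.mem_inter.mpr ⟨hp, hp'⟩
    simp_all
  set 𝒞 : Finset (Finset (Fin v)) := {A, A', C, D} with h𝒞
  refine h4 𝒞 ?_ ⟨A, by simp [h𝒞]⟩ ?_ ?_
  · intro b hb
    simp only [h𝒞, Finset.mem_insert, Finset.mem_singleton] at hb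
    rcases hb with rfl|rfl|rfl|rfl <;> assumption
  · apply le_trans (Finset.card_insert_le _ _)
    have : ({A', C, D} : Finset (Finset (Fin v))).card ≤ 3 := by
      apply le_trans (Finset.card_insert_le _ _)
      have := Finset.card_insert_le C ({D} : Finset (Finset (Fin v)))
      simp at this ⊢
      omega
    omega
  · intro p
    have hsum : (𝒞.filter fun b => p ∈ b).card =
        (if p ∈ A then 1 else 0) + ((if p ∈ A' then 1 else 0) +
          ((if p ∈ C then 1 else 0) + (if p ∈ D then 1 else 0))) := by
      rw [Finset.card_filter, h𝒞]
      rw [Finset.sum_insert (by simp [hAA', hAC, hAD]),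
        Finset.sum_insert (by simp [hA'C, hA'D]),
        Finset.sum_insert (by simp [hCD]), Finset.sum_singleton]
    have e1 : (if p ∈ A then 1 else 0) + (if p ∈ A' then 1 else 0)
        = (if p ∈ A ∪ A' then 1 else 0) := by
      by_cases h1 : p ∈ A
      · have h2 : p ∉ A' := fun h => hAdisj p h1 h
        simp [Finset.mem_union, h1, h2]
      · by_cases h2 : p ∈ A' <;> simp [Finset.mem_union, h1, h2]
    have e2 : (if p ∈ C then 1 else 0) + (if p ∈ D then 1 else 0)
        = (if p ∈ C ∪ D then 1 else 0) := by
      by_cases h1 : p ∈ C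
      · have h2 : p ∉ D := fun h => hdisj p h1 h
        simp [Finset.mem_union, h1, h2]
      · by_cases h2 : p ∈ D <;> simp [Finset.mem_union, h1, h2]
    have e3 : (if p ∈ A ∪ A' then 1 else 0) = (if p ∈ C ∪ D then 1 else 0) := by rw [heq]
    rw [hsum, Nat.even_iff]
    omega

lemma fiber_card (hblock : ∀ b ∈ B, b.card = 3)
    (hsts : ∀ p : Finset (Fin v), p.card = 2 → ∃! b, b ∈ B ∧ p ⊆ b)
    {C D : Finset (Fin v)} (hC : C ∈ B) (hD : D ∈ B) (hCD : C ≠ D)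
    {x : Fin v} (hxC : x ∈ C) (hxD : x ∈ D) :
    (Finset.univ.filter (fun P : Finset (Finset (Fin v)) =>
      P ⊆ B ∧ P.card = 2 ∧ P ∩ ({C, D} : Finset (Finset (Fin v))) = ∅ ∧
        symmDiff C D ⊆ P.sup id)).card = 2 := by
  -- the common point is unique
  have huniq : ∀ y, y ∈ C → y ∈ D → y = x := by
    intro y hyC hyD
    by_contra h
    exact hCD (blocks_eq hsts hC hD h hyC hxC hyD hxD)
  -- decompose C and D
  obtain ⟨c1, c2, hc12, hCe⟩ : ∃ a b, a ≠ b ∧ C.erase x = {a, b} :=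
    Finset.card_eq_two.mp (by rw [Finset.card_erase_of_mem hxC, hblock C hC])
  obtain ⟨d1, d2, hd12, hDe⟩ : ∃ a b, a ≠ b ∧ D.erase x = {a, b} :=
    Finset.card_eq_two.mp (by rw [Finset.card_erase_of_mem hxD, hblock D hD])
  have hc1m : c1 ∈ C.erase x := by rw [hCe]; simp
  have hc2m : c2 ∈ C.erase x := by rw [hCe]; simp
  have hd1m : d1 ∈ D.erase x := by rw [hDe]; simp
  have hd2m : d2 ∈ D.erase x := by rw [hDe]; simp
  have hc1C : c1 ∈ C := Finset.mem_of_mem_erase hc1m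
  have hc2C : c2 ∈ C := Finset.mem_of_mem_erase hc2m
  have hd1D : d1 ∈ D := Finset.mem_of_mem_erase hd1m
  have hd2D : d2 ∈ D := Finset.mem_of_mem_erase hd2m
  have hc1x : c1 ≠ x := (Finset.mem_erase.mp hc1m).1
  have hc2x : c2 ≠ x := (Finset.mem_erase.mp hc2m).1
  have hd1x : d1 ≠ x := (Finset.mem_erase.mp hd1m).1
  have hd2x : d2 ≠ x := (Finset.mem_erase.mp hd2m).1
  have hc1D : c1 ∉ D := fun h => hc1x (huniq c1 hc1C h)
  have hc2D : c2 ∉ D := fun h => hc2x (huniq c2 hc2C h)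
  have hd1C : d1 ∉ C := fun h => hd1x (huniq d1 h hd1D)
  have hd2C : d2 ∉ C := fun h => hd2x (huniq d2 h hd2D)
  have hc1d1 : c1 ≠ d1 := fun h => hc1D (h ▸ hd1D)
  have hc1d2 : c1 ≠ d2 := fun h => hc1D (h ▸ hd2D)
  have hc2d1 : c2 ≠ d1 := fun h => hc2D (h ▸ hd1D)
  have hc2d2 : c2 ≠ d2 := fun h => hc2D (h ▸ hd2D)
  have hmemC : ∀ y ∈ C, y = x ∨ y = c1 ∨ y = c2 := by
    intro y hy
    by_cases h : y = x
    · exact Or.inl h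
    · have : y ∈ C.erase x := Finset.mem_erase.mpr ⟨h, hy⟩
      rw [hCe] at this
      simp only [Finset.mem_insert, Finset.mem_singleton] at this
      exact Or.inr this
  have hmemD : ∀ y ∈ D, y = x ∨ y = d1 ∨ y = d2 := by
    intro y hy
    by_cases h : y = x
    · exact Or.inl h
    · have : y ∈ D.erase x := Finset.mem_erase.mpr ⟨h, hy⟩
      rw [hDe] at this
      simp only [Finset.mem_insert, Finset.mem_singleton] at this
      exact Or.inr this
  have hSmem : ∀ y, y ∈ symmDiff C D ↔ (y = c1 ∨ y = c2 ∨ y = d1 ∨ y = d2) := by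
    intro y
    rw [Finset.mem_symmDiff]
    constructor
    · rintro (⟨hyC, hyD⟩ | ⟨hyD, hyC⟩)
      · rcases hmemC y hyC with rfl | h
        · exact absurd hxD hyD
        · tauto
      · rcases hmemD y hyD with rfl | h
        · exact absurd hxC hyC
        · tauto
    · rintro (rfl | rfl | rfl | rfl)
      · exact Or.inl ⟨hc1C, hc1D⟩
      · exact Or.inl ⟨hc2C, hc2D⟩
      · exact Or.inr ⟨hd1D, hd1C⟩
      · exact Or.inr ⟨hd2D, hd2C⟩
  -- the four cross blocks
  obtain ⟨E1, hE1B, hc1E1, hd1E1⟩ := exists_block hsts hc1d1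
  obtain ⟨F1, hF1B, hc2F1, hd2F1⟩ := exists_block hsts hc2d2
  obtain ⟨E2, hE2B, hc1E2, hd2E2⟩ := exists_block hsts hc1d2
  obtain ⟨F2, hF2B, hc2F2, hd1F2⟩ := exists_block hsts hc2d1
  have hE1C : E1 ≠ C := fun h => hd1C (h ▸ hd1E1)
  have hE1D : E1 ≠ D := fun h => hc1D (h ▸ hc1E1)
  have hF1C : F1 ≠ C := fun h => hd2C (h ▸ hd2F1)
  have hF1D : F1 ≠ D := fun h => hc2D (h ▸ hc2F1)
  have hE2C : E2 ≠ C := fun h => hd2C (h ▸ hd2E2)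
  have hE2D : E2 ≠ D := fun h => hc1D (h ▸ hc1E2)
  have hF2C : F2 ≠ C := fun h => hd1C (h ▸ hd1F2)
  have hF2D : F2 ≠ D := fun h => hc2D (h ▸ hc2F2)
  have hE1F1 : E1 ≠ F1 := by
    intro h
    exact hE1C (blocks_eq hsts hE1B hC hc12 hc1E1 (h ▸ hc2F1) hc1C hc2C)
  have hE2F2 : E2 ≠ F2 := by
    intro h
    exact hE2C (blocks_eq hsts hE2B hC hc12 hc1E2 (h ▸ hc2F2) hc1C hc2C)
  have hE1E2 : E1 ≠ E2 := by
    intro h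
    exact hE1D (blocks_eq hsts hE1B hD hd12 hd1E1 (h ▸ hd2E2) hd1D hd2D)
  have hE1F2 : E1 ≠ F2 := by
    intro h
    exact hE1C (blocks_eq hsts hE1B hC hc12 hc1E1 (h ▸ hc2F2) hc1C hc2C)
  have hP1P2 : ({E1, F1} : Finset (Finset (Fin v))) ≠ {E2, F2} := by
    intro h
    have : E1 ∈ ({E2, F2} : Finset (Finset (Fin v))) := by
      rw [← h]; simp
    simp only [Finset.mem_insert, Finset.mem_singleton] at this
    rcases this with h' | h'
    · exact hE1E2 h'
    · exact hE1F2 h'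
  -- key auxiliary classification
  have aux : ∀ A A' : Finset (Fin v), A ∈ B → A' ∈ B → A ≠ C → A ≠ D → A' ≠ C → A' ≠ D →
      (∀ y : Fin v, (y = c1 ∨ y = c2 ∨ y = d1 ∨ y = d2) → y ∈ A ∨ y ∈ A') → c1 ∈ A →
      (({A, A'} : Finset (Finset (Fin v))) = {E1, F1} ∨
        ({A, A'} : Finset (Finset (Fin v))) = {E2, F2}) := by
    intro A A' hA hA' hAC hAD hA'C hA'D hcov hc1A
    have hc2A : c2 ∉ A := fun h => hAC (blocks_eq hsts hA hC hc12 hc1A h hc1C hc2C)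
    have hc2A' : c2 ∈ A' := (hcov c2 (by tauto)).resolve_left hc2A
    by_cases hd1A : d1 ∈ A
    · have hd2A : d2 ∉ A := fun h => hAD (blocks_eq hsts hA hD hd12 hd1A h hd1D hd2D)
      have hd2A' : d2 ∈ A' := (hcov d2 (by tauto)).resolve_left hd2A
      left
      rw [blocks_eq hsts hA hE1B hc1d1 hc1A hd1A hc1E1 hd1E1,
        blocks_eq hsts hA' hF1B hc2d2 hc2A' hd2A' hc2F1 hd2F1]
    · have hd1A' : d1 ∈ A' := (hcov d1 (by tauto)).resolve_left hd1A
      have hd2A' : d2 ∉ A' := fun h => hA'D (blocks_eq hsts hA' hD hd12 hd1A' h hd1D hd2D)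
      have hd2A : d2 ∈ A := (hcov d2 (by tauto)).resolve_right hd2A'
      right
      rw [blocks_eq hsts hA hE2B hc1d2 hc1A hd2A hc1E2 hd2E2,
        blocks_eq hsts hA' hF2B hc2d1 hc2A' hd1A' hc2F2 hd1F2]
  have hset : Finset.univ.filter (fun P : Finset (Finset (Fin v)) =>
      P ⊆ B ∧ P.card = 2 ∧ P ∩ ({C, D} : Finset (Finset (Fin v))) = ∅ ∧
        symmDiff C D ⊆ P.sup id) = {({E1, F1} : Finset (Finset (Fin v))), {E2, F2}} := by
    ext P
    simp only [Finset.mem_filter, Finset.mem_univ, true_and, Finset.mem_insert,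
      Finset.mem_singleton]
    constructor
    · rintro ⟨hPB, hP2, hPQ, hPS⟩
      obtain ⟨A, A', hAA', rfl⟩ := Finset.card_eq_two.mp hP2
      have hA : A ∈ B := hPB (Finset.mem_insert_self _ _)
      have hA' : A' ∈ B := hPB (Finset.mem_insert_of_mem (Finset.mem_singleton_self _))
      have hnot : ∀ G ∈ ({A, A'} : Finset (Finset (Fin v))), G ≠ C ∧ G ≠ D := by
        intro G hG
        constructor <;> intro h
        · have : G ∈ ({A, A'} : Finset (Finset (Fin v))) ∩ {C, D} :=
            Finset.mem_inter.mpr ⟨hG, by simp [h]⟩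
          rw [hPQ] at this; exact absurd this (Finset.notMem_empty G)
        · have : G ∈ ({A, A'} : Finset (Finset (Fin v))) ∩ {C, D} :=
            Finset.mem_inter.mpr ⟨hG, by simp [h]⟩
          rw [hPQ] at this; exact absurd this (Finset.notMem_empty G)
      have hnA := hnot A (Finset.mem_insert_self _ _)
      have hnA' := hnot A' (Finset.mem_insert_of_mem (Finset.mem_singleton_self _))
      have hsup : ({A, A'} : Finset (Finset (Fin v))).sup id = A ∪ A' := by
        simp [Finset.sup_eq_union]
      have hcov : ∀ y : Fin v, (y = c1 ∨ y = c2 ∨ y = d1 ∨ y = d2) → y ∈ A ∨ y ∈ A' := by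
        intro y hy
        have : y ∈ ({A, A'} : Finset (Finset (Fin v))).sup id := hPS ((hSmem y).mpr hy)
        rw [hsup] at this
        exact Finset.mem_union.mp this
      rcases hcov c1 (by tauto) with h | h
      · exact aux A A' hA hA' hnA.1 hnA.2 hnA'.1 hnA'.2 hcov h
      · have := aux A' A hA' hA hnA'.1 hnA'.2 hnA.1 hnA.2
          (fun y hy => (hcov y hy).symm) h
        rw [Finset.pair_comm A A']
        exact this
    · have hsub : ∀ G G' : Finset (Fin v), G ∈ B → G' ∈ B → G ≠ G' → G ≠ C → G ≠ D →
          G' ≠ C → G' ≠ D → c1 ∈ G → c2 ∈ G' → d1 ∈ G ∪ G' → d2 ∈ G ∪ G' →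
          (({G, G'} : Finset (Finset (Fin v))) ⊆ B ∧
            ({G, G'} : Finset (Finset (Fin v))).card = 2 ∧
            ({G, G'} : Finset (Finset (Fin v))) ∩ {C, D} = ∅ ∧
            symmDiff C D ⊆ ({G, G'} : Finset (Finset (Fin v))).sup id) := by
        intro G G' hG hG' hGG' hGC hGD hG'C hG'D hc1G hc2G' hd1 hd2
        refine ⟨?_, Finset.card_pair hGG', ?_, ?_⟩
        · intro b hb
          simp only [Finset.mem_insert, Finset.mem_singleton] at hb
          rcases hb with rfl | rfl <;> assumption
        · rw [Finset.eq_empty_iff_forall_notMem]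
          intro b hb
          rw [Finset.mem_inter] at hb
          simp only [Finset.mem_insert, Finset.mem_singleton] at hb
          obtain ⟨h1, h2⟩ := hb
          rcases h1 with rfl | rfl
          · exact h2.elim hGC hGD
          · exact h2.elim hG'C hG'D
        · have hsup : ({G, G'} : Finset (Finset (Fin v))).sup id = G ∪ G' := by
            simp [Finset.sup_eq_union]
          rw [hsup]
          intro y hy
          rcases (hSmem y).mp hy with rfl | rfl | rfl | rfl
          · exact Finset.mem_union_left _ hc1G
          · exact Finset.mem_union_right _ hc2G'
          · exact hd1
          · exact hd2
      rintro (rfl | rfl)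
      · exact hsub E1 F1 hE1B hF1B hE1F1 hE1C hE1D hF1C hF1D hc1E1 hc2F1
          (Finset.mem_union_left _ hd1E1) (Finset.mem_union_right _ hd2F1)
      · exact hsub E2 F2 hE2B hF2B hE2F2 hE2C hE2D hF2C hF2D hc1E2 hc2F2
          (Finset.mem_union_right _ hd1F2) (Finset.mem_union_left _ hd2E2)
  rw [hset]
  rw [Finset.card_insert_of_notMem (by simpa using hP1P2), Finset.card_singleton]


end helpers

/-- Theorem (two Xs and two errors): in a 4-even-free `STS(v)` with `v ≥ 7` and
`n = v(v-1)/6` blocks, the number `|F|` of pairs of two disjoint unordered pairs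
`({A,B},{C,D})` of distinct blocks with `C △ D ⊆ A ∪ B` satisfies
`|F| / (C(n,2)·C(n-2,2)) = 1296 / ((v+2)(v+3)(v-4)(v²-v-18))`. -/
theorem sts_two_errors_two_xs (v : ℕ) (hv : 7 ≤ v) (B : Finset (Finset (Fin v)))
    (hblock : ∀ b ∈ B, b.card = 3)
    (hsts : ∀ p : Finset (Fin v), p.card = 2 → ∃! b, b ∈ B ∧ p ⊆ b)
    (h4 : ∀ C ⊆ B, C.Nonempty → C.card ≤ 4 → ¬ IsEvenConfig C)
    (n : ℕ) (hn : n = v * (v - 1) / 6) (hBn : B.card = n) :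
    ((Finset.univ.filter
        (fun PQ : Finset (Finset (Fin v)) × Finset (Finset (Fin v)) =>
          PQ.1 ⊆ B ∧ PQ.2 ⊆ B ∧ PQ.1.card = 2 ∧ PQ.2.card = 2 ∧ PQ.1 ∩ PQ.2 = ∅ ∧
            ∃ C ∈ PQ.2, ∃ D ∈ PQ.2, C ≠ D ∧ symmDiff C D ⊆ PQ.1.sup id)).card : ℚ) /
        ((n.choose 2 : ℚ) * ((n - 2).choose 2 : ℚ)) =
      1296 / (((v : ℚ) + 2) * ((v : ℚ) + 3) * ((v : ℚ) - 4) *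
        ((v : ℚ) ^ 2 - (v : ℚ) - 18)) := by
  set Fs := Finset.univ.filter
        (fun PQ : Finset (Finset (Fin v)) × Finset (Finset (Fin v)) =>
          PQ.1 ⊆ B ∧ PQ.2 ⊆ B ∧ PQ.1.card = 2 ∧ PQ.2.card = 2 ∧ PQ.1 ∩ PQ.2 = ∅ ∧
            ∃ C ∈ PQ.2, ∃ D ∈ PQ.2, C ≠ D ∧ symmDiff C D ⊆ PQ.1.sup id) with hFsdef
  set I := Finset.univ.filter
      (fun Q : Finset (Finset (Fin v)) => Q ⊆ B ∧ Q.card = 2 ∧ ∃ x : Fin v, ∀ b ∈ Q, x ∈ b)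
    with hIdef
  have hmaps : ∀ PQ ∈ Fs, PQ.2 ∈ I := by
    intro PQ hPQ
    rw [hFsdef, Finset.mem_filter] at hPQ
    obtain ⟨-, hPB, hQB, hP2, hQ2, hPQe, C', hC'Q, D', hD'Q, hC'D', hsub⟩ := hPQ
    have hQeq : ({C', D'} : Finset (Finset (Fin v))) = PQ.2 := by
      apply Finset.eq_of_subset_of_card_le
      · intro b hb
        simp only [Finset.mem_insert, Finset.mem_singleton] at hb
        rcases hb with rfl | rfl <;> assumption
      · rw [hQ2, Finset.card_pair hC'D']
    have hne : (C' ∩ D').Nonempty := by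
      by_contra h
      rw [Finset.not_nonempty_iff_eq_empty] at h
      have hdisj : ∀ p : Fin v, p ∈ C' → p ∈ D' → False := by
        intro p h1 h2
        have : p ∈ C' ∩ D' := Finset.mem_inter.mpr ⟨h1, h2⟩
        rw [h] at this
        exact absurd this (Finset.notMem_empty p)
      obtain ⟨A, A', hAA', hPe⟩ := Finset.card_eq_two.mp hP2
      have hnotin : ∀ G, G ∈ PQ.1 → G ∈ PQ.2 → False := by
        intro G h1 h2
        have : G ∈ PQ.1 ∩ PQ.2 := Finset.mem_inter.mpr ⟨h1, h2⟩
        rw [hPQe] at this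
        exact absurd this (Finset.notMem_empty G)
      have hAP : A ∈ PQ.1 := by rw [hPe]; simp
      have hA'P : A' ∈ PQ.1 := by rw [hPe]; simp
      have hcov : C' ∪ D' ⊆ A ∪ A' := by
        intro y hy
        have hyS : y ∈ symmDiff C' D' := by
          rw [Finset.mem_symmDiff]
          rcases Finset.mem_union.mp hy with h1 | h1
          · exact Or.inl ⟨h1, fun h2 => hdisj y h1 h2⟩
          · exact Or.inr ⟨h1, fun h2 => hdisj y h2 h1⟩
        have hmem := hsub hyS
        rw [hPe] at hmem
        have hsupu : ({A, A'} : Finset (Finset (Fin v))).sup id = A ∪ A' := by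
          simp [Finset.sup_eq_union]
        rw [hsupu] at hmem
        exact hmem
      exact no_disjoint_cover hblock h4 (hPB hAP) (hPB hA'P) (hQB hC'Q) (hQB hD'Q)
        hAA' hC'D'
        (fun hh => hnotin A hAP (by rw [hh]; exact hC'Q))
        (fun hh => hnotin A hAP (by rw [hh]; exact hD'Q))
        (fun hh => hnotin A' hA'P (by rw [hh]; exact hC'Q))
        (fun hh => hnotin A' hA'P (by rw [hh]; exact hD'Q))
        hdisj hcov
    rw [hIdef, Finset.mem_filter]
    obtain ⟨x, hx⟩ := hne
    rw [Finset.mem_inter] at hx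
    refine ⟨Finset.mem_univ _, hQB, hQ2, x, ?_⟩
    intro b hb
    rw [← hQeq] at hb
    simp only [Finset.mem_insert, Finset.mem_singleton] at hb
    rcases hb with rfl | rfl
    · exact hx.1
    · exact hx.2
  have hfiber : ∀ Q ∈ I, (Fs.filter (fun PQ => PQ.2 = Q)).card = 2 := by
    intro Q hQ
    rw [hIdef, Finset.mem_filter] at hQ
    obtain ⟨-, hQB, hQ2, x, hx⟩ := hQ
    obtain ⟨C, D, hCD, rfl⟩ := Finset.card_eq_two.mp hQ2
    have hC : C ∈ B := hQB (by simp)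
    have hD : D ∈ B := hQB (by simp)
    have hxC : x ∈ C := hx C (by simp)
    have hxD : x ∈ D := hx D (by simp)
    refine Eq.trans ?_ (fiber_card hblock hsts hC hD hCD hxC hxD)
    apply Finset.card_bij (fun PQ _ => PQ.1)
    · intro PQ hPQ
      rw [Finset.mem_filter] at hPQ
      obtain ⟨hPQF, hsnd⟩ := hPQ
      rw [hFsdef, Finset.mem_filter] at hPQF
      obtain ⟨-, hPB, hQB', hP2, hQ2', hPQe, C', hC'Q, D', hD'Q, hC'D', hsub⟩ := hPQF
      rw [Finset.mem_filter]
      refine ⟨Finset.mem_univ _, hPB, hP2, by rw [← hsnd]; exact hPQe, ?_⟩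
      rw [hsnd] at hC'Q hD'Q
      simp only [Finset.mem_insert, Finset.mem_singleton] at hC'Q hD'Q
      rcases hC'Q with rfl | rfl <;> rcases hD'Q with rfl | rfl
      · exact absurd rfl hC'D'
      · exact hsub
      · rw [symmDiff_comm] at hsub; exact hsub
      · exact absurd rfl hC'D'
    · intro a ha b hb hab
      rw [Finset.mem_filter] at ha hb
      exact Prod.ext hab (ha.2.trans hb.2.symm)
    · intro P hP
      rw [Finset.mem_filter] at hP
      obtain ⟨-, hPB, hP2, hPe, hsub⟩ := hP
      refine ⟨(P, {C, D}), ?_, rfl⟩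
      rw [Finset.mem_filter]
      refine ⟨?_, rfl⟩
      rw [hFsdef, Finset.mem_filter]
      exact ⟨Finset.mem_univ _, hPB, hQB, hP2, hQ2, hPe, C, by simp, D, by simp, hCD, hsub⟩
  have hFcard : Fs.card = 2 * I.card := by
    rw [Finset.card_eq_sum_card_fiberwise hmaps, Finset.sum_congr rfl hfiber,
      Finset.sum_const, smul_eq_mul, mul_comm]
  have hIcard : I.card = ∑ x : Fin v, ((B.filter (fun b => x ∈ b)).card).choose 2 := by
    have hIeq : I = Finset.univ.biUnion
        (fun x : Fin v => (B.filter (fun b => x ∈ b)).powersetCard 2) := by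
      ext Q
      rw [hIdef]
      simp only [Finset.mem_filter, Finset.mem_univ, true_and, Finset.mem_biUnion,
        Finset.mem_powersetCard]
      constructor
      · rintro ⟨hQB, hQ2, x, hx⟩
        exact ⟨x, fun b hb => Finset.mem_filter.mpr ⟨hQB hb, hx b hb⟩, hQ2⟩
      · rintro ⟨x, hsub, hQ2⟩
        exact ⟨fun b hb => (Finset.mem_filter.mp (hsub hb)).1, hQ2,
          x, fun b hb => (Finset.mem_filter.mp (hsub hb)).2⟩
    have hdisj : ∀ x ∈ (Finset.univ : Finset (Fin v)), ∀ y ∈ (Finset.univ : Finset (Fin v)),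
        x ≠ y → Disjoint ((B.filter (fun b => x ∈ b)).powersetCard 2)
          ((B.filter (fun b => y ∈ b)).powersetCard 2) := by
      intro x _ y _ hxy
      rw [Finset.disjoint_left]
      intro Q hQx hQy
      rw [Finset.mem_powersetCard] at hQx hQy
      obtain ⟨C, D, hCD, rfl⟩ := Finset.card_eq_two.mp hQx.2
      have h1 := Finset.mem_filter.mp (hQx.1 (Finset.mem_insert_self _ _))
      have h2 := Finset.mem_filter.mp
        (hQx.1 (Finset.mem_insert_of_mem (Finset.mem_singleton_self _)))
      have h3 := Finset.mem_filter.mp (hQy.1 (Finset.mem_insert_self _ _))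
      have h4 := Finset.mem_filter.mp
        (hQy.1 (Finset.mem_insert_of_mem (Finset.mem_singleton_self _)))
      exact hCD (blocks_eq hsts h1.1 h2.1 hxy h1.2 h3.2 h2.2 h4.2)
    rw [hIeq, Finset.card_biUnion hdisj]
    exact Finset.sum_congr rfl (fun x _ => Finset.card_powersetCard 2 _)
  have hper : ∀ x : Fin v,
      8 * ((B.filter (fun b => x ∈ b)).card).choose 2 = (v - 1) * (v - 3) := by
    intro x
    have h2r := rep_count hblock hsts x
    set r := (B.filter (fun b => x ∈ b)).card with hr
    have hdvd : 2 ∣ r * (r - 1) := by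
      rcases Nat.even_or_odd r with h | h
      · exact Dvd.dvd.mul_right h.two_dvd _
      · exact Dvd.dvd.mul_left (Nat.Odd.sub_odd h odd_one).two_dvd _
    have hk : 2 * r.choose 2 = r * (r - 1) := by
      rw [Nat.choose_two_right]
      exact Nat.mul_div_cancel' hdvd
    have hv1 : v - 1 = 2 * r := by omega
    have hv3 : v - 3 = 2 * (r - 1) := by omega
    calc 8 * r.choose 2 = 4 * (2 * r.choose 2) := by ring
      _ = 4 * (r * (r - 1)) := by rw [hk]
      _ = (2 * r) * (2 * (r - 1)) := by ring
      _ = (v - 1) * (v - 3) := by rw [← hv1, ← hv3]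
  have hF4 : 4 * Fs.card = v * ((v - 1) * (v - 3)) := by
    rw [hFcard, hIcard]
    calc 4 * (2 * ∑ x : Fin v, ((B.filter (fun b => x ∈ b)).card).choose 2)
        = 8 * ∑ x : Fin v, ((B.filter (fun b => x ∈ b)).card).choose 2 := by ring
      _ = ∑ x : Fin v, 8 * ((B.filter (fun b => x ∈ b)).card).choose 2 := Finset.mul_sum _ _ _
      _ = ∑ _x : Fin v, (v - 1) * (v - 3) := Finset.sum_congr rfl (fun x _ => hper x)
      _ = v * ((v - 1) * (v - 3)) := by
          rw [Finset.sum_const, smul_eq_mul, Finset.card_univ, Fintype.card_fin]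
  have h6n : 6 * n = v * (v - 1) := by rw [← hBn]; exact six_n hblock hsts
  have hn7 : 7 ≤ n := by
    have h42 : 7 * 6 ≤ v * (v - 1) := Nat.mul_le_mul hv (by omega)
    omega
  have hq7 : (7 : ℚ) ≤ (v : ℚ) := by exact_mod_cast hv
  have hvq1 : ((v - 1 : ℕ) : ℚ) = (v : ℚ) - 1 := by
    rw [Nat.cast_sub (by omega)]; norm_num
  have hvq3 : ((v - 3 : ℕ) : ℚ) = (v : ℚ) - 3 := by
    rw [Nat.cast_sub (by omega)]; norm_num
  have hNval : (n : ℚ) = ((v : ℚ) ^ 2 - (v : ℚ)) / 6 := by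
    have hc := congrArg (Nat.cast : ℕ → ℚ) h6n
    push_cast at hc
    rw [hvq1] at hc
    rw [eq_div_iff (by norm_num : (6 : ℚ) ≠ 0)]
    linear_combination hc
  have hFq : 4 * ((Fs.card : ℕ) : ℚ) = (v : ℚ) * (((v : ℚ) - 1) * ((v : ℚ) - 3)) := by
    have hc := congrArg (Nat.cast : ℕ → ℚ) hF4
    push_cast at hc
    rw [hvq1, hvq3] at hc
    exact hc
  have hch1 : (n.choose 2 : ℚ) = (n : ℚ) * ((n : ℚ) - 1) / 2 := by
    rw [Nat.cast_choose_two]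
  have hch2 : ((n - 2).choose 2 : ℚ) = ((n : ℚ) - 2) * ((n : ℚ) - 3) / 2 := by
    rw [Nat.cast_choose_two, Nat.cast_sub (by omega : 2 ≤ n)]
    push_cast
    ring
  set q := (v : ℚ) with hqdef
  have hq0 : (0 : ℚ) < q := by linarith
  have hq1 : (0 : ℚ) < q - 1 := by linarith
  have hq3 : (0 : ℚ) < q - 3 := by linarith
  have hq4 : (0 : ℚ) < q - 4 := by linarith
  have hp2 : (0 : ℚ) < q + 2 := by linarith
  have hp3 : (0 : ℚ) < q + 3 := by linarith
  have h18 : (0 : ℚ) < q ^ 2 - q - 18 := by nlinarith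
  have hX : q * (q - 1) * (q - 3) / 4 ≠ 0 :=
    ne_of_gt (div_pos (mul_pos (mul_pos hq0 hq1) hq3) (by norm_num))
  have hR : (q + 2) * (q + 3) * (q - 4) * (q ^ 2 - q - 18) ≠ 0 :=
    ne_of_gt (mul_pos (mul_pos (mul_pos hp2 hp3) hq4) h18)
  have hFcq : ((Fs.card : ℕ) : ℚ) = q * (q - 1) * (q - 3) / 4 := by
    rw [eq_div_iff (by norm_num : (4 : ℚ) ≠ 0)]
    linear_combination hFq
  have hD : (n.choose 2 : ℚ) * ((n - 2).choose 2 : ℚ) =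
      (q * (q - 1) * (q - 3) / 4) *
        ((q + 2) * (q + 3) * (q - 4) * (q ^ 2 - q - 18) / 1296) := by
    rw [hch1, hch2, hNval]
    ring
  rw [hFcq, hD, div_eq_div_iff
    (mul_ne_zero hX (div_ne_zero hR (by norm_num))) hR]
  ring
end

section
/- For every integer v > 3, no Steiner triple system of order v is 8-even-free; that is, every STS(v) with v > 3 contains a nonempty even configuration consisting of at most 8 blocks. -/
namespace NoEightAux

variable {α : Type*} [DecidableEq α]

def symmList : List α → Finset α
  | [] => ∅
  | x :: L => symmDiff {x} (symmList L)

lemma mem_symmList (L : List α) (x : α) : x ∈ symmList L ↔ Odd (L.count x) := by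
  induction L with
  | nil => simp [symmList]
  | cons y L ih =>
    simp only [symmList, Finset.mem_symmDiff, Finset.mem_singleton, ih, List.count_cons,
      Nat.odd_iff, beq_iff_eq]
    by_cases h : y = x
    · subst h; simp; omega
    · simp [h, Ne.symm h]

lemma card_symmList_le (L : List α) : (symmList L).card ≤ L.length := by
  induction L with
  | nil => simp [symmList]
  | cons y L ih =>
    have h1 : symmList (y :: L) ⊆ {y} ∪ symmList L := by
      intro z hz
      rw [symmList] at hz
      rw [Finset.mem_union]
      rcases Finset.mem_symmDiff.mp hz with ⟨h, _⟩ | ⟨h, _⟩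
      · exact Or.inl h
      · exact Or.inr h
    have h2 := Finset.card_le_card h1
    have h3 := Finset.card_union_le ({y} : Finset α) (symmList L)
    simp only [Finset.card_singleton, List.length_cons] at *
    omega

lemma filter_symmDiff (q : α → Prop) [DecidablePred q] (s t : Finset α) :
    (symmDiff s t).filter q = symmDiff (s.filter q) (t.filter q) := by
  ext x
  simp only [Finset.mem_filter, Finset.mem_symmDiff]
  tauto

lemma card_symmDiff_mod (s t : Finset α) :
    (symmDiff s t).card % 2 = (s.card + t.card) % 2 := by
  have h1 : symmDiff s t = (s ∪ t) \ (s ∩ t) := by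
    ext x; simp only [Finset.mem_symmDiff, Finset.mem_sdiff, Finset.mem_union, Finset.mem_inter]
    tauto
  have h2 := Finset.card_union_add_card_inter s t
  have h3 : (s ∩ t) ⊆ (s ∪ t) := le_trans Finset.inter_subset_left Finset.subset_union_left
  have h4 := Finset.card_sdiff_of_subset h3
  have h5 := Finset.card_le_card h3
  rw [h1, h4]
  omega

lemma countP_symmList (L : List α) (q : α → Prop) [DecidablePred q] :
    ((symmList L).filter q).card % 2 = (L.countP fun x => decide (q x)) % 2 := by
  induction L with
  | nil => simp [symmList]
  | cons y L ih =>
    rw [symmList, filter_symmDiff, card_symmDiff_mod, List.countP_cons]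
    rw [Finset.filter_singleton]
    by_cases h : q y <;> simp [h] <;> omega

lemma indicator_triple (p a b c : α) (h1 : a ≠ b) (h2 : a ≠ c) (h3 : b ≠ c) :
    (if p ∈ ({a, b, c} : Finset α) then 1 else 0) =
      (if p = a then 1 else 0) + ((if p = b then 1 else 0) + (if p = c then 1 else 0)) := by
  by_cases ha : p = a <;> by_cases hb : p = b <;> by_cases hc : p = c <;>
    simp_all [Finset.mem_insert]

end NoEightAux

/-- Theorem: for `v > 3`, no Steiner triple system of order `v` is 8-even-free;
every `STS(v)` contains a nonempty even configuration of at most 8 blocks. -/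
theorem no_eight_even_free_sts (v : ℕ) (hv : 3 < v) (B : Finset (Finset (Fin v)))
    (hblock : ∀ b ∈ B, b.card = 3)
    (hsts : ∀ p : Finset (Fin v), p.card = 2 → ∃! b, b ∈ B ∧ p ⊆ b) :
    ∃ C ⊆ B, C.Nonempty ∧ C.card ≤ 8 ∧ IsEvenConfig C := by
  classical
  by_contra hno
  -- If we can exhibit a list of at most 8 blocks in which each point occurs an
  -- even number of times (counted with list multiplicity) and some block occurs
  -- an odd number of times, we are done (contradiction with hno).
  have found : ∀ L : List (Finset (Fin v)), (∀ T ∈ L, T ∈ B) → L.length ≤ 8 →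
      (∀ p : Fin v, (L.countP fun T => decide (p ∈ T)) % 2 = 0) →
      (∃ T, Odd (L.count T)) → False := by
    rintro L hLB hlen hpar ⟨T, hT⟩
    refine hno ⟨NoEightAux.symmList L, ?_, ⟨T, (NoEightAux.mem_symmList L T).2 hT⟩,
      le_trans (NoEightAux.card_symmList_le L) hlen, ?_⟩
    · intro S hS
      have : Odd (L.count S) := (NoEightAux.mem_symmList L S).1 hS
      have hmem : S ∈ L := by
        by_contra hc
        rw [List.count_eq_zero_of_not_mem hc] at this
        simp at this
      exact hLB S hmem
    · intro p
      rw [Nat.even_iff]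
      rw [NoEightAux.countP_symmList L (fun T => p ∈ T)]
      exact hpar p
  -- the third point of the block through two distinct points
  have third : ∀ p q : Fin v, ∃ r : Fin v, p ≠ q →
      r ≠ p ∧ r ≠ q ∧ ({p, q, r} : Finset (Fin v)) ∈ B ∧
      ∀ T ∈ B, p ∈ T → q ∈ T → T = {p, q, r} := by
    intro p q
    by_cases h : p = q
    · exact ⟨p, fun hc => absurd h hc⟩
    · have hcard2 : ({p, q} : Finset (Fin v)).card = 2 := by
        rw [Finset.card_insert_of_notMem (by simpa using h), Finset.card_singleton]
      obtain ⟨T, ⟨hTB, hsub⟩, huniq⟩ := hsts {p, q} hcard2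
      have hpT : p ∈ T := hsub (by simp)
      have hqT : q ∈ T := hsub (by simp)
      have hcard := hblock T hTB
      have hsd : (T \ {p, q}).card = 1 := by
        rw [Finset.card_sdiff_of_subset hsub, hcard, hcard2]
      obtain ⟨r, hr⟩ := Finset.card_eq_one.mp hsd
      have hrmem : r ∈ T ∧ r ∉ ({p, q} : Finset (Fin v)) := by
        have : r ∈ T \ {p, q} := by rw [hr]; exact Finset.mem_singleton_self r
        simpa [Finset.mem_sdiff] using this
      have hrp : r ≠ p := fun hc => hrmem.2 (by simp [hc])
      have hrq : r ≠ q := fun hc => hrmem.2 (by simp [hc])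
      have hTeq : T = {p, q, r} := by
        refine (Finset.eq_of_subset_of_card_le ?_ ?_).symm
        · intro z hz
          simp only [Finset.mem_insert, Finset.mem_singleton] at hz
          rcases hz with rfl | rfl | rfl
          · exact hpT
          · exact hqT
          · exact hrmem.1
        · rw [hcard]
          have hc3 : ({p, q, r} : Finset (Fin v)).card = 3 := by
            rw [Finset.card_insert_of_notMem (by simp [h, Ne.symm hrp]),
              Finset.card_insert_of_notMem (by simp [Ne.symm hrq]), Finset.card_singleton]
          omega
      refine ⟨r, fun _ => ⟨hrp, hrq, hTeq ▸ hTB, ?_⟩⟩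
      intro T' hT'B hpT' hqT'
      rw [← hTeq]
      exact huniq T' ⟨hT'B, by intro z hz; simp only [Finset.mem_insert,
        Finset.mem_singleton] at hz; rcases hz with rfl | rfl; exacts [hpT', hqT']⟩
  choose t ht using third
  have tne1 : ∀ p q, p ≠ q → t p q ≠ p := fun p q h => (ht p q h).1
  have tne2 : ∀ p q, p ≠ q → t p q ≠ q := fun p q h => (ht p q h).2.1
  have tmem : ∀ p q, p ≠ q → ({p, q, t p q} : Finset (Fin v)) ∈ B :=
    fun p q h => (ht p q h).2.2.1
  have tuniq : ∀ p q, p ≠ q → ∀ T ∈ B, p ∈ T → q ∈ T → T = {p, q, t p q} :=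
    fun p q h => (ht p q h).2.2.2
  have tuniq2 : ∀ (p q : Fin v), p ≠ q → ∀ T T', T ∈ B → T' ∈ B →
      p ∈ T → q ∈ T → p ∈ T' → q ∈ T' → T = T' := by
    intro p q h T T' h1 h2 h3 h4 h5 h6
    rw [tuniq p q h T h1 h3 h4, tuniq p q h T' h2 h5 h6]
  have tthird : ∀ (p q : Fin v), p ≠ q → ∀ r : Fin v,
      ({p, q, r} : Finset (Fin v)) ∈ B → r ≠ p → r ≠ q → r = t p q := by
    intro p q h r hmem hrp hrq
    have heq := tuniq p q h _ hmem (by simp) (by simp)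
    have hrmem : r ∈ ({p, q, t p q} : Finset (Fin v)) := heq ▸ (by simp)
    simp only [Finset.mem_insert, Finset.mem_singleton] at hrmem
    rcases hrmem with h' | h' | h'
    · exact absurd h' hrp
    · exact absurd h' hrq
    · exact h'
  -- fix two distinct points a, b and the third point c of their block
  obtain ⟨a, b, hab⟩ : ∃ a b : Fin v, a ≠ b :=
    ⟨⟨0, by omega⟩, ⟨1, by omega⟩, by simp [Fin.ext_iff]⟩
  obtain ⟨c, hc⟩ : ∃ c : Fin v, c = t a b := ⟨_, rfl⟩
  have hca : c ≠ a := hc ▸ tne1 a b hab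
  have hcb : c ≠ b := hc ▸ tne2 a b hab
  have habc : ({a, b, c} : Finset (Fin v)) ∈ B := hc ▸ tmem a b hab
  -- basic facts about third points
  have A2 : ∀ x : Fin v, x ≠ a → x ≠ c → t a x ≠ b := by
    intro x hxa hxc hcon
    have h1 : a ≠ x := Ne.symm hxa
    have heq := tuniq2 a b hab {a, x, t a x} {a, b, c} (tmem a x h1) habc
      (by simp) (by rw [hcon]; simp) (by simp) (by simp)
    have hx : x ∈ ({a, b, c} : Finset (Fin v)) := by rw [← heq]; simp
    simp only [Finset.mem_insert, Finset.mem_singleton] at hx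
    rcases hx with h | h | h
    · exact hxa h
    · rw [h] at hcon; exact hcb (hc.trans hcon)
    · exact hxc h
  have A3 : ∀ x : Fin v, x ≠ a → x ≠ b → t a x ≠ c := by
    intro x hxa hxb hcon
    have h1 : a ≠ x := Ne.symm hxa
    have heq := tuniq2 a c (Ne.symm hca) {a, x, t a x} {a, b, c} (tmem a x h1) habc
      (by simp) (by rw [← hcon]; simp) (by simp) (by simp)
    have hx : x ∈ ({a, b, c} : Finset (Fin v)) := by rw [← heq]; simp
    simp only [Finset.mem_insert, Finset.mem_singleton] at hx
    rcases hx with h | h | h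
    · exact hxa h
    · exact hxb h
    · rw [h] at hcon; exact tne2 a c (Ne.symm hca) hcon
  have B2 : ∀ x : Fin v, x ≠ b → x ≠ c → t b x ≠ a := by
    intro x hxb hxc hcon
    have h1 : b ≠ x := Ne.symm hxb
    have heq := tuniq2 a b hab {b, x, t b x} {a, b, c} (tmem b x h1) habc
      (by rw [← hcon]; simp) (by simp) (by simp) (by simp)
    have hx : x ∈ ({a, b, c} : Finset (Fin v)) := by rw [← heq]; simp
    simp only [Finset.mem_insert, Finset.mem_singleton] at hx
    rcases hx with h | h | h
    · rw [h] at hcon; exact tne2 b a (Ne.symm hab) hcon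
    · exact hxb h
    · exact hxc h
  have B3 : ∀ x : Fin v, x ≠ a → x ≠ b → t b x ≠ c := by
    intro x hxa hxb hcon
    have h1 : b ≠ x := Ne.symm hxb
    have heq := tuniq2 b c (Ne.symm hcb) {b, x, t b x} {a, b, c} (tmem b x h1) habc
      (by simp) (by rw [← hcon]; simp) (by simp) (by simp)
    have hx : x ∈ ({a, b, c} : Finset (Fin v)) := by rw [← heq]; simp
    simp only [Finset.mem_insert, Finset.mem_singleton] at hx
    rcases hx with h | h | h
    · exact hxa h
    · exact hxb h
    · rw [h] at hcon; exact tne2 b c (Ne.symm hcb) hcon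
  have inva : ∀ x : Fin v, x ≠ a → t a (t a x) = x := by
    intro x hxa
    have h1 : a ≠ x := Ne.symm hxa
    have h2 : a ≠ t a x := Ne.symm (tne1 a x h1)
    refine (tthird a (t a x) h2 x ?_ hxa (Ne.symm (tne2 a x h1))).symm
    have heq : ({a, t a x, x} : Finset (Fin v)) = {a, x, t a x} := by
      ext z; simp only [Finset.mem_insert, Finset.mem_singleton]; tauto
    rw [heq]; exact tmem a x h1
  have invb : ∀ x : Fin v, x ≠ b → t b (t b x) = x := by
    intro x hxb
    have h1 : b ≠ x := Ne.symm hxb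
    have h2 : b ≠ t b x := Ne.symm (tne1 b x h1)
    refine (tthird b (t b x) h2 x ?_ hxb (Ne.symm (tne2 b x h1))).symm
    have heq : ({b, t b x, x} : Finset (Fin v)) = {b, x, t b x} := by
      ext z; simp only [Finset.mem_insert, Finset.mem_singleton]; tauto
    rw [heq]; exact tmem b x h1
  have fg : ∀ x : Fin v, x ≠ a → x ≠ b → x ≠ c → t a x ≠ t b x := by
    intro x hxa hxb hxc hcon
    have h1 : x ≠ t a x := Ne.symm (tne2 a x (Ne.symm hxa))
    have heq := tuniq2 x (t a x) h1 {a, x, t a x} {b, x, t b x}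
      (tmem a x (Ne.symm hxa)) (tmem b x (Ne.symm hxb))
      (by simp) (by simp) (by simp) (by rw [hcon]; simp)
    have hb2 : b ∈ ({a, x, t a x} : Finset (Fin v)) := by rw [heq]; simp
    simp only [Finset.mem_insert, Finset.mem_singleton] at hb2
    rcases hb2 with h | h | h
    · exact hab h.symm
    · exact hxb h.symm
    · exact A2 x hxa hxc h.symm
  -- the pack of facts along a path x, t a x, t b (t a x), t a (t b (t a x))
  have pack : ∀ x : Fin v, x ≠ a → x ≠ b → x ≠ c →
      (t a x ≠ a ∧ t a x ≠ b ∧ t a x ≠ c ∧ t a x ≠ x) ∧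
      (t b (t a x) ≠ a ∧ t b (t a x) ≠ b ∧ t b (t a x) ≠ c ∧ t b (t a x) ≠ x ∧
        t b (t a x) ≠ t a x) ∧
      (t a (t b (t a x)) ≠ a ∧ t a (t b (t a x)) ≠ b ∧ t a (t b (t a x)) ≠ c ∧
        t a (t b (t a x)) ≠ x ∧ t a (t b (t a x)) ≠ t a x ∧
        t a (t b (t a x)) ≠ t b (t a x)) := by
    intro x hxa hxb hxc
    have p2a := tne1 a x (Ne.symm hxa)
    have p2x := tne2 a x (Ne.symm hxa)
    have p2b := A2 x hxa hxc
    have p2c := A3 x hxa hxb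
    have p3b := tne1 b (t a x) (Ne.symm p2b)
    have p3p2 := tne2 b (t a x) (Ne.symm p2b)
    have p3a := B2 (t a x) p2b p2c
    have p3c := B3 (t a x) p2a p2b
    have p3x : t b (t a x) ≠ x := by
      intro hcon
      have h5 := invb (t a x) p2b
      rw [hcon] at h5
      exact fg x hxa hxb hxc h5.symm
    have p4a := tne1 a (t b (t a x)) (Ne.symm p3a)
    have p4p3 := tne2 a (t b (t a x)) (Ne.symm p3a)
    have p4b := A2 (t b (t a x)) p3a p3c
    have p4c := A3 (t b (t a x)) p3a p3b
    have p4p2 : t a (t b (t a x)) ≠ t a x := by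
      intro hcon
      have h5 := inva (t b (t a x)) p3a
      rw [hcon, inva x hxa] at h5
      exact p3x h5.symm
    have p4x : t a (t b (t a x)) ≠ x := by
      intro hcon
      have h5 := inva (t b (t a x)) p3a
      rw [hcon] at h5
      exact (Ne.symm p3p2) h5
    exact ⟨⟨p2a, p2b, p2c, p2x⟩, ⟨p3a, p3b, p3c, p3x, p3p2⟩,
      ⟨p4a, p4b, p4c, p4x, p4p2, p4p3⟩⟩
  -- Step B : no Pasch configuration, i.e. 4-cycles are impossible
  have pasch : ∀ x : Fin v, x ≠ a → x ≠ b → x ≠ c → t a (t b (t a x)) ≠ t b x := by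
    intro x hxa hxb hxc hcon
    obtain ⟨⟨p2a, p2b, p2c, p2x⟩, ⟨p3a, p3b, p3c, p3x, p3p2⟩,
      ⟨p4a, p4b, p4c, p4x, p4p2, p4p3⟩⟩ := pack x hxa hxb hxc
    refine found [{a, x, t a x}, {b, t a x, t b (t a x)},
      {a, t b (t a x), t a (t b (t a x))}, {b, x, t a (t b (t a x))}] ?_ (by simp) ?_ ?_
    · intro T hT
      simp only [List.mem_cons, List.not_mem_nil, or_false] at hT
      rcases hT with rfl | rfl | rfl | rfl
      · exact tmem a x (Ne.symm hxa)
      · exact tmem b (t a x) (Ne.symm p2b)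
      · exact tmem a (t b (t a x)) (Ne.symm p3a)
      · rw [hcon]; exact tmem b x (Ne.symm hxb)
    · intro p
      simp only [List.countP_cons, List.countP_nil, decide_eq_true_eq]
      rw [NoEightAux.indicator_triple p a x (t a x) (Ne.symm hxa) (Ne.symm p2a) (Ne.symm p2x),
        NoEightAux.indicator_triple p b (t a x) (t b (t a x)) (Ne.symm p2b) (Ne.symm p3b)
          (Ne.symm p3p2),
        NoEightAux.indicator_triple p a (t b (t a x)) (t a (t b (t a x))) (Ne.symm p3a)
          (Ne.symm p4a) (Ne.symm p4p3),
        NoEightAux.indicator_triple p b x (t a (t b (t a x))) (Ne.symm hxb) (Ne.symm p4b)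
          (Ne.symm p4x)]
      omega
    · refine ⟨{a, x, t a x}, ?_⟩
      have ne1 : ({a, x, t a x} : Finset (Fin v)) ≠ {b, t a x, t b (t a x)} := by
        intro h
        have hb' : b ∈ ({a, x, t a x} : Finset (Fin v)) := by rw [h]; simp
        simp only [Finset.mem_insert, Finset.mem_singleton] at hb'
        rcases hb' with h' | h' | h'
        exacts [hab h'.symm, hxb h'.symm, p2b h'.symm]
      have ne2 : ({a, x, t a x} : Finset (Fin v)) ≠ {a, t b (t a x), t a (t b (t a x))} := by
        intro h
        have hb' : x ∈ ({a, t b (t a x), t a (t b (t a x))} : Finset (Fin v)) := by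
          rw [← h]; simp
        simp only [Finset.mem_insert, Finset.mem_singleton] at hb'
        rcases hb' with h' | h' | h'
        exacts [hxa h', p3x h'.symm, p4x h'.symm]
      have ne3 : ({a, x, t a x} : Finset (Fin v)) ≠ {b, x, t a (t b (t a x))} := by
        intro h
        have hb' : b ∈ ({a, x, t a x} : Finset (Fin v)) := by rw [h]; simp
        simp only [Finset.mem_insert, Finset.mem_singleton] at hb'
        rcases hb' with h' | h' | h'
        exacts [hab h'.symm, hxb h'.symm, p2b h'.symm]
      simp only [List.count_cons, List.count_nil, beq_iff_eq]
      rw [if_neg (Ne.symm ne3), if_neg (Ne.symm ne2), if_neg (Ne.symm ne1)]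
      simp
  -- Step C : facts about E x = t x (t b (t a x))
  have Efacts : ∀ x : Fin v, x ≠ a → x ≠ b → x ≠ c →
      (t x (t b (t a x)) ≠ a ∧ t x (t b (t a x)) ≠ b ∧ t x (t b (t a x)) ≠ c ∧
       t x (t b (t a x)) ≠ x ∧ t x (t b (t a x)) ≠ t a x ∧
       t x (t b (t a x)) ≠ t b (t a x)) := by
    intro x hxa hxb hxc
    obtain ⟨⟨p2a, p2b, p2c, p2x⟩, ⟨p3a, p3b, p3c, p3x, p3p2⟩,
      ⟨p4a, p4b, p4c, p4x, p4p2, p4p3⟩⟩ := pack x hxa hxb hxc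
    have hEx := tne1 x (t b (t a x)) (Ne.symm p3x)
    have hEp3 := tne2 x (t b (t a x)) (Ne.symm p3x)
    have hEa : t x (t b (t a x)) ≠ a := by
      intro hcon
      have heq := tuniq2 a x (Ne.symm hxa) {x, t b (t a x), t x (t b (t a x))} {a, x, t a x}
        (tmem x (t b (t a x)) (Ne.symm p3x)) (tmem a x (Ne.symm hxa))
        (Finset.mem_insert.mpr (Or.inr (Finset.mem_insert.mpr
          (Or.inr (Finset.mem_singleton.mpr hcon.symm))))) (by simp) (by simp) (by simp)
      have h5 : t b (t a x) ∈ ({a, x, t a x} : Finset (Fin v)) := by rw [← heq]; simp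
      simp only [Finset.mem_insert, Finset.mem_singleton] at h5
      rcases h5 with h | h | h
      exacts [p3a h, p3x h, p3p2 h]
    have hEb : t x (t b (t a x)) ≠ b := by
      intro hcon
      have heq := tuniq2 b (t b (t a x)) (Ne.symm p3b) {x, t b (t a x), t x (t b (t a x))}
        {b, t a x, t b (t a x)}
        (tmem x (t b (t a x)) (Ne.symm p3x)) (tmem b (t a x) (Ne.symm p2b))
        (Finset.mem_insert.mpr (Or.inr (Finset.mem_insert.mpr
          (Or.inr (Finset.mem_singleton.mpr hcon.symm))))) (by simp) (by simp) (by simp)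
      have h5 : x ∈ ({b, t a x, t b (t a x)} : Finset (Fin v)) := by rw [← heq]; simp
      simp only [Finset.mem_insert, Finset.mem_singleton] at h5
      rcases h5 with h | h | h
      exacts [hxb h, p2x h.symm, p3x h.symm]
    have hEp2 : t x (t b (t a x)) ≠ t a x := by
      intro hcon
      have heq := tuniq2 x (t a x) (Ne.symm p2x) {x, t b (t a x), t x (t b (t a x))}
        {a, x, t a x}
        (tmem x (t b (t a x)) (Ne.symm p3x)) (tmem a x (Ne.symm hxa))
        (by simp) (Finset.mem_insert.mpr (Or.inr (Finset.mem_insert.mpr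
          (Or.inr (Finset.mem_singleton.mpr hcon.symm))))) (by simp) (by simp)
      have h5 : a ∈ ({x, t b (t a x), t x (t b (t a x))} : Finset (Fin v)) := by rw [heq]; simp
      simp only [Finset.mem_insert, Finset.mem_singleton] at h5
      rcases h5 with h | h | h
      · exact hxa h.symm
      · exact p3a h.symm
      · rw [← h] at hcon; exact p2a hcon.symm
    have hEc : t x (t b (t a x)) ≠ c := by
      intro hcon
      refine found [{a, x, t a x}, {b, t a x, t b (t a x)}, {x, t b (t a x), c},
        {a, b, c}] ?_ (by simp) ?_ ?_
      · intro T hT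
        simp only [List.mem_cons, List.not_mem_nil, or_false] at hT
        rcases hT with rfl | rfl | rfl | rfl
        · exact tmem a x (Ne.symm hxa)
        · exact tmem b (t a x) (Ne.symm p2b)
        · rw [← hcon]; exact tmem x (t b (t a x)) (Ne.symm p3x)
        · exact habc
      · intro p
        simp only [List.countP_cons, List.countP_nil, decide_eq_true_eq]
        rw [NoEightAux.indicator_triple p a x (t a x) (Ne.symm hxa) (Ne.symm p2a)
            (Ne.symm p2x),
          NoEightAux.indicator_triple p b (t a x) (t b (t a x)) (Ne.symm p2b) (Ne.symm p3b)
            (Ne.symm p3p2),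
          NoEightAux.indicator_triple p x (t b (t a x)) c (Ne.symm p3x) hxc p3c,
          NoEightAux.indicator_triple p a b c hab (Ne.symm hca) (Ne.symm hcb)]
        omega
      · refine ⟨{a, b, c}, ?_⟩
        have ne1 : ({a, b, c} : Finset (Fin v)) ≠ {a, x, t a x} := by
          intro h
          have hb' : b ∈ ({a, x, t a x} : Finset (Fin v)) := by rw [← h]; simp
          simp only [Finset.mem_insert, Finset.mem_singleton] at hb'
          rcases hb' with h' | h' | h'
          exacts [hab h'.symm, hxb h'.symm, p2b h'.symm]
        have ne2 : ({a, b, c} : Finset (Fin v)) ≠ {b, t a x, t b (t a x)} := by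
          intro h
          have hb' : a ∈ ({b, t a x, t b (t a x)} : Finset (Fin v)) := by rw [← h]; simp
          simp only [Finset.mem_insert, Finset.mem_singleton] at hb'
          rcases hb' with h' | h' | h'
          exacts [hab h', p2a h'.symm, p3a h'.symm]
        have ne3 : ({a, b, c} : Finset (Fin v)) ≠ {x, t b (t a x), c} := by
          intro h
          have hb' : a ∈ ({x, t b (t a x), c} : Finset (Fin v)) := by rw [← h]; simp
          simp only [Finset.mem_insert, Finset.mem_singleton] at hb'
          rcases hb' with h' | h' | h'
          exacts [hxa h'.symm, p3a h'.symm, hca h'.symm]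
        simp only [List.count_cons, List.count_nil, beq_iff_eq]
        rw [if_neg (Ne.symm ne1), if_neg (Ne.symm ne2), if_neg (Ne.symm ne3)]
        simp
    exact ⟨hEa, hEb, hEc, hEx, hEp2, hEp3⟩
  -- Step D : injectivity of E
  have Einj : ∀ x y : Fin v, x ≠ a → x ≠ b → x ≠ c → y ≠ a → y ≠ b → y ≠ c →
      t x (t b (t a x)) = t y (t b (t a y)) → x = y := by
    intro x y hxa hxb hxc hya hyb hyc hE
    by_contra hxy
    obtain ⟨⟨p2a, p2b, p2c, p2x⟩, ⟨p3a, p3b, p3c, p3x, p3p2⟩, -⟩ := pack x hxa hxb hxc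
    obtain ⟨⟨q2a, q2b, q2c, q2x⟩, ⟨q3a, q3b, q3c, q3x, q3p2⟩, -⟩ := pack y hya hyb hyc
    obtain ⟨hEa, hEb, hEc, hEx, hEp2, hEp3⟩ := Efacts x hxa hxb hxc
    obtain ⟨hFa, hFb, hFc, hFx, hFp2, hFp3⟩ := Efacts y hya hyb hyc
    have hEy : t x (t b (t a x)) ≠ y := by rw [hE]; exact hFx
    have hEq3 : t x (t b (t a x)) ≠ t b (t a y) := by rw [hE]; exact hFp3
    have hmems : ∀ T ∈ [({a, x, t a x} : Finset (Fin v)), {b, t a x, t b (t a x)},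
        {x, t b (t a x), t x (t b (t a x))}, {a, y, t a y}, {b, t a y, t b (t a y)},
        {y, t b (t a y), t x (t b (t a x))}], T ∈ B := by
      intro T hT
      simp only [List.mem_cons, List.not_mem_nil, or_false] at hT
      rcases hT with rfl | rfl | rfl | rfl | rfl | rfl
      · exact tmem a x (Ne.symm hxa)
      · exact tmem b (t a x) (Ne.symm p2b)
      · exact tmem x (t b (t a x)) (Ne.symm p3x)
      · exact tmem a y (Ne.symm hya)
      · exact tmem b (t a y) (Ne.symm q2b)
      · rw [hE]; exact tmem y (t b (t a y)) (Ne.symm q3x)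
    have hpar : ∀ p : Fin v, (List.countP (fun T => decide (p ∈ T))
        [({a, x, t a x} : Finset (Fin v)), {b, t a x, t b (t a x)},
        {x, t b (t a x), t x (t b (t a x))}, {a, y, t a y}, {b, t a y, t b (t a y)},
        {y, t b (t a y), t x (t b (t a x))}]) % 2 = 0 := by
      intro p
      simp only [List.countP_cons, List.countP_nil, decide_eq_true_eq]
      rw [NoEightAux.indicator_triple p a x (t a x) (Ne.symm hxa) (Ne.symm p2a) (Ne.symm p2x),
        NoEightAux.indicator_triple p b (t a x) (t b (t a x)) (Ne.symm p2b) (Ne.symm p3b)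
          (Ne.symm p3p2),
        NoEightAux.indicator_triple p x (t b (t a x)) (t x (t b (t a x))) (Ne.symm p3x)
          (Ne.symm hEx) (Ne.symm hEp3),
        NoEightAux.indicator_triple p a y (t a y) (Ne.symm hya) (Ne.symm q2a) (Ne.symm q2x),
        NoEightAux.indicator_triple p b (t a y) (t b (t a y)) (Ne.symm q2b) (Ne.symm q3b)
          (Ne.symm q3p2),
        NoEightAux.indicator_triple p y (t b (t a y)) (t x (t b (t a x))) (Ne.symm q3x)
          (Ne.symm hEy) (Ne.symm hEq3)]
      omega
    by_cases hT1 : ({a, x, t a x} : Finset (Fin v)) = {a, y, t a y}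
    · -- then x = t a y and t a x = y
      have hx' : x ∈ ({a, y, t a y} : Finset (Fin v)) := by rw [← hT1]; simp
      simp only [Finset.mem_insert, Finset.mem_singleton] at hx'
      rcases hx' with h' | h' | h'
      · exact hxa h'
      · exact hxy h'
      have hyx : t a y = x := h'.symm
      have htaxy : t a x = y := by rw [h', inva y hya]
      by_cases hby : t b x = y
      · exact fg x hxa hxb hxc (by rw [htaxy, ← hby])
      · refine found _ hmems (by simp) hpar ⟨{b, t a x, t b (t a x)}, ?_⟩
        have ne1 : ({b, t a x, t b (t a x)} : Finset (Fin v)) ≠ {a, x, t a x} := by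
          intro h
          have hb' : b ∈ ({a, x, t a x} : Finset (Fin v)) := by rw [← h]; simp
          simp only [Finset.mem_insert, Finset.mem_singleton] at hb'
          rcases hb' with h' | h' | h'
          exacts [hab h'.symm, hxb h'.symm, p2b h'.symm]
        have ne3 : ({b, t a x, t b (t a x)} : Finset (Fin v)) ≠
            {x, t b (t a x), t x (t b (t a x))} := by
          intro h
          have hb' : b ∈ ({x, t b (t a x), t x (t b (t a x))} : Finset (Fin v)) := by
            rw [← h]; simp
          simp only [Finset.mem_insert, Finset.mem_singleton] at hb'
          rcases hb' with h' | h' | h'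
          exacts [hxb h'.symm, p3b h'.symm, hEb h'.symm]
        have ne4 : ({b, t a x, t b (t a x)} : Finset (Fin v)) ≠ {a, y, t a y} := by
          intro h
          have hb' : b ∈ ({a, y, t a y} : Finset (Fin v)) := by rw [← h]; simp
          simp only [Finset.mem_insert, Finset.mem_singleton] at hb'
          rcases hb' with h' | h' | h'
          exacts [hab h'.symm, hyb h'.symm, q2b h'.symm]
        have ne5 : ({b, t a x, t b (t a x)} : Finset (Fin v)) ≠ {b, t a y, t b (t a y)} := by
          intro h
          have hb' : t a x ∈ ({b, t a y, t b (t a y)} : Finset (Fin v)) := by rw [← h]; simp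
          simp only [Finset.mem_insert, Finset.mem_singleton] at hb'
          rcases hb' with h' | h' | h'
          · exact p2b h'
          · rw [hyx] at h'; exact p2x h'
          · rw [hyx] at h'; rw [htaxy] at h'; exact hby h'.symm
        have ne6 : ({b, t a x, t b (t a x)} : Finset (Fin v)) ≠
            {y, t b (t a y), t x (t b (t a x))} := by
          intro h
          have hb' : b ∈ ({y, t b (t a y), t x (t b (t a x))} : Finset (Fin v)) := by
            rw [← h]; simp
          simp only [Finset.mem_insert, Finset.mem_singleton] at hb'
          rcases hb' with h' | h' | h'
          exacts [hyb h'.symm, q3b h'.symm, hEb h'.symm]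
        simp only [List.count_cons, List.count_nil, beq_iff_eq]
        rw [if_neg (Ne.symm ne1), if_neg (Ne.symm ne3), if_neg (Ne.symm ne4),
          if_neg (Ne.symm ne5), if_neg (Ne.symm ne6)]
        simp
    · refine found _ hmems (by simp) hpar ⟨{a, x, t a x}, ?_⟩
      have ne2 : ({a, x, t a x} : Finset (Fin v)) ≠ {b, t a x, t b (t a x)} := by
        intro h
        have hb' : b ∈ ({a, x, t a x} : Finset (Fin v)) := by rw [h]; simp
        simp only [Finset.mem_insert, Finset.mem_singleton] at hb'
        rcases hb' with h' | h' | h'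
        exacts [hab h'.symm, hxb h'.symm, p2b h'.symm]
      have ne3 : ({a, x, t a x} : Finset (Fin v)) ≠
          {x, t b (t a x), t x (t b (t a x))} := by
        intro h
        have hb' : a ∈ ({x, t b (t a x), t x (t b (t a x))} : Finset (Fin v)) := by
          rw [← h]; simp
        simp only [Finset.mem_insert, Finset.mem_singleton] at hb'
        rcases hb' with h' | h' | h'
        exacts [hxa h'.symm, p3a h'.symm, hEa h'.symm]
      have ne5 : ({a, x, t a x} : Finset (Fin v)) ≠ {b, t a y, t b (t a y)} := by
        intro h
        have hb' : a ∈ ({b, t a y, t b (t a y)} : Finset (Fin v)) := by rw [← h]; simp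
        simp only [Finset.mem_insert, Finset.mem_singleton] at hb'
        rcases hb' with h' | h' | h'
        exacts [hab h', q2a h'.symm, q3a h'.symm]
      have ne6 : ({a, x, t a x} : Finset (Fin v)) ≠
          {y, t b (t a y), t x (t b (t a x))} := by
        intro h
        have hb' : a ∈ ({y, t b (t a y), t x (t b (t a x))} : Finset (Fin v)) := by
          rw [← h]; simp
        simp only [Finset.mem_insert, Finset.mem_singleton] at hb'
        rcases hb' with h' | h' | h'
        exacts [hya h'.symm, q3a h'.symm, hEa h'.symm]
      simp only [List.count_cons, List.count_nil, beq_iff_eq]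
      rw [if_neg (Ne.symm ne2), if_neg (Ne.symm ne3), if_neg (Ne.symm hT1),
        if_neg (Ne.symm ne5), if_neg (Ne.symm ne6)]
      simp
  -- Step E : surjectivity of E on the complement of {a, b, c}
  have Esurj : ∀ w : Fin v, w ≠ a → w ≠ b → w ≠ c →
      ∃ z : Fin v, z ≠ a ∧ z ≠ b ∧ z ≠ c ∧ t z (t b (t a z)) = w := by
    intro w hwa hwb hwc
    classical
    set S : Finset (Fin v) := Finset.univ.filter (fun u => u ≠ a ∧ u ≠ b ∧ u ≠ c) with hS
    have hmaps : ∀ u ∈ S, t u (t b (t a u)) ∈ S := by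
      intro u hu
      simp only [hS, Finset.mem_filter, Finset.mem_univ, true_and] at hu ⊢
      obtain ⟨h1, h2, h3, _, _, _⟩ := Efacts u hu.1 hu.2.1 hu.2.2
      exact ⟨h1, h2, h3⟩
    have hwS : w ∈ S := by
      simp only [hS, Finset.mem_filter, Finset.mem_univ, true_and]
      exact ⟨hwa, hwb, hwc⟩
    obtain ⟨z, hz, hzw⟩ := Finset.surj_on_of_inj_on_of_card_le
      (fun u (_ : u ∈ S) => t u (t b (t a u))) (fun u hu => hmaps u hu)
      (fun u1 u2 h1 h2 heq => by
        simp only [hS, Finset.mem_filter, Finset.mem_univ, true_and] at h1 h2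
        exact Einj u1 u2 h1.1 h1.2.1 h1.2.2 h2.1 h2.2.1 h2.2.2 heq)
      le_rfl w hwS
    simp only [hS, Finset.mem_filter, Finset.mem_univ, true_and] at hz
    exact ⟨z, hz.1, hz.2.1, hz.2.2, hzw.symm⟩
  -- Step G : the chord of every 3-window passes through c
  have stepG : ∀ x : Fin v, x ≠ a → x ≠ b → x ≠ c →
      t x (t a (t b (t a x))) = c := by
    intro x hxa hxb hxc
    by_contra hDc'
    obtain ⟨⟨p2a, p2b, p2c, p2x⟩, ⟨p3a, p3b, p3c, p3x, p3p2⟩,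
      ⟨p4a, p4b, p4c, p4x, p4p2, p4p3⟩⟩ := pack x hxa hxb hxc
    have hpasch := pasch x hxa hxb hxc
    obtain ⟨D, hD⟩ : ∃ D : Fin v, D = t x (t a (t b (t a x))) := ⟨_, rfl⟩
    have hDc : D ≠ c := by rw [hD]; exact hDc'
    have hDx : D ≠ x := by rw [hD]; exact tne1 x _ (Ne.symm p4x)
    have hDp4 : D ≠ t a (t b (t a x)) := by rw [hD]; exact tne2 x _ (Ne.symm p4x)
    have hDa : D ≠ a := by
      rw [hD]; intro hcon
      have heq := tuniq2 a x (Ne.symm hxa)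
        {x, t a (t b (t a x)), t x (t a (t b (t a x)))} {a, x, t a x}
        (tmem x _ (Ne.symm p4x)) (tmem a x (Ne.symm hxa))
        (Finset.mem_insert.mpr (Or.inr (Finset.mem_insert.mpr
          (Or.inr (Finset.mem_singleton.mpr hcon.symm))))) (by simp) (by simp) (by simp)
      have h5 : t a (t b (t a x)) ∈ ({a, x, t a x} : Finset (Fin v)) := by rw [← heq]; simp
      simp only [Finset.mem_insert, Finset.mem_singleton] at h5
      rcases h5 with h | h | h
      exacts [p4a h, p4x h, p4p2 h]
    have hDb : D ≠ b := by
      rw [hD]; intro hcon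
      have heq := tuniq2 b x (Ne.symm hxb)
        {x, t a (t b (t a x)), t x (t a (t b (t a x)))} {b, x, t b x}
        (tmem x _ (Ne.symm p4x)) (tmem b x (Ne.symm hxb))
        (Finset.mem_insert.mpr (Or.inr (Finset.mem_insert.mpr
          (Or.inr (Finset.mem_singleton.mpr hcon.symm))))) (by simp) (by simp) (by simp)
      have h5 : t a (t b (t a x)) ∈ ({b, x, t b x} : Finset (Fin v)) := by rw [← heq]; simp
      simp only [Finset.mem_insert, Finset.mem_singleton] at h5
      rcases h5 with h | h | h
      exacts [p4b h, p4x h, hpasch h]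
    have hDp2 : D ≠ t a x := by
      rw [hD]; intro hcon
      have heq := tuniq2 x (t a x) (Ne.symm p2x)
        {x, t a (t b (t a x)), t x (t a (t b (t a x)))} {a, x, t a x}
        (tmem x _ (Ne.symm p4x)) (tmem a x (Ne.symm hxa))
        (by simp) (Finset.mem_insert.mpr (Or.inr (Finset.mem_insert.mpr
          (Or.inr (Finset.mem_singleton.mpr hcon.symm))))) (by simp) (by simp)
      have h5 : a ∈ ({x, t a (t b (t a x)), t x (t a (t b (t a x)))} : Finset (Fin v)) := by
        rw [heq]; simp
      simp only [Finset.mem_insert, Finset.mem_singleton] at h5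
      rcases h5 with h | h | h
      · exact hxa h.symm
      · exact p4a h.symm
      · rw [← h] at hcon; exact p2a hcon.symm
    have hDp3 : D ≠ t b (t a x) := by
      rw [hD]; intro hcon
      have heq := tuniq2 (t b (t a x)) (t a (t b (t a x))) (Ne.symm p4p3)
        {x, t a (t b (t a x)), t x (t a (t b (t a x)))}
        {a, t b (t a x), t a (t b (t a x))}
        (tmem x _ (Ne.symm p4x)) (tmem a (t b (t a x)) (Ne.symm p3a))
        (Finset.mem_insert.mpr (Or.inr (Finset.mem_insert.mpr
          (Or.inr (Finset.mem_singleton.mpr hcon.symm))))) (by simp) (by simp) (by simp)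
      have h5 : x ∈ ({a, t b (t a x), t a (t b (t a x))} : Finset (Fin v)) := by
        rw [← heq]; simp
      simp only [Finset.mem_insert, Finset.mem_singleton] at h5
      rcases h5 with h | h | h
      exacts [hxa h, p3x h.symm, p4x h.symm]
    -- the partner y of D through a, and a preimage z of y under E
    obtain ⟨y, hy⟩ : ∃ y : Fin v, y = t a D := ⟨_, rfl⟩
    have hya : y ≠ a := hy ▸ tne1 a D (Ne.symm hDa)
    have hyD : y ≠ D := hy ▸ tne2 a D (Ne.symm hDa)
    have hyb : y ≠ b := hy ▸ A2 D hDa hDc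
    have hyc : y ≠ c := hy ▸ A3 D hDa hDb
    obtain ⟨z, hza, hzb, hzc, hEz⟩ := Esurj y hya hyb hyc
    obtain ⟨⟨q2a, q2b, q2c, q2x⟩, ⟨q3a, q3b, q3c, q3x, q3p2⟩, -⟩ := pack z hza hzb hzc
    obtain ⟨hFa, hFb, hFc, hFx, hFp2, hFp3⟩ := Efacts z hza hzb hzc
    have hyz : y ≠ z := by rw [← hEz]; exact hFx
    have hyq3 : y ≠ t b (t a z) := by rw [← hEz]; exact hFp3
    -- the configuration W3(x) Δ W2(z) Δ {a, D, y}
    have hmems8 : ∀ T ∈ [({a, x, t a x} : Finset (Fin v)), {b, t a x, t b (t a x)},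
        {a, t b (t a x), t a (t b (t a x))}, {x, t a (t b (t a x)), D},
        {a, z, t a z}, {b, t a z, t b (t a z)}, {z, t b (t a z), y}, {a, D, y}],
        T ∈ B := by
      intro T hT
      simp only [List.mem_cons, List.not_mem_nil, or_false] at hT
      rcases hT with rfl | rfl | rfl | rfl | rfl | rfl | rfl | rfl
      · exact tmem a x (Ne.symm hxa)
      · exact tmem b (t a x) (Ne.symm p2b)
      · exact tmem a (t b (t a x)) (Ne.symm p3a)
      · rw [hD]; exact tmem x (t a (t b (t a x))) (Ne.symm p4x)
      · exact tmem a z (Ne.symm hza)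
      · exact tmem b (t a z) (Ne.symm q2b)
      · rw [← hEz]; exact tmem z (t b (t a z)) (Ne.symm q3x)
      · rw [hy]; exact tmem a D (Ne.symm hDa)
    have hpar8 : ∀ p : Fin v, (List.countP (fun T => decide (p ∈ T))
        [({a, x, t a x} : Finset (Fin v)), {b, t a x, t b (t a x)},
        {a, t b (t a x), t a (t b (t a x))}, {x, t a (t b (t a x)), D},
        {a, z, t a z}, {b, t a z, t b (t a z)}, {z, t b (t a z), y}, {a, D, y}]) % 2
        = 0 := by
      intro p
      simp only [List.countP_cons, List.countP_nil, decide_eq_true_eq]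
      rw [NoEightAux.indicator_triple p a x (t a x) (Ne.symm hxa) (Ne.symm p2a) (Ne.symm p2x),
        NoEightAux.indicator_triple p b (t a x) (t b (t a x)) (Ne.symm p2b) (Ne.symm p3b)
          (Ne.symm p3p2),
        NoEightAux.indicator_triple p a (t b (t a x)) (t a (t b (t a x))) (Ne.symm p3a)
          (Ne.symm p4a) (Ne.symm p4p3),
        NoEightAux.indicator_triple p x (t a (t b (t a x))) D (Ne.symm p4x) (Ne.symm hDx)
          hDp4.symm.symm.symm,
        NoEightAux.indicator_triple p a z (t a z) (Ne.symm hza) (Ne.symm q2a) (Ne.symm q2x),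
        NoEightAux.indicator_triple p b (t a z) (t b (t a z)) (Ne.symm q2b) (Ne.symm q3b)
          (Ne.symm q3p2),
        NoEightAux.indicator_triple p z (t b (t a z)) y (Ne.symm q3x) (Ne.symm hyz)
          (Ne.symm hyq3),
        NoEightAux.indicator_triple p a D y (Ne.symm hDa) (Ne.symm hya) (Ne.symm hyD)]
      omega
    -- nonemptiness: case analysis
    have foundT4 : ({x, t a (t b (t a x)), D} : Finset (Fin v)) ≠ {z, t b (t a z), y} →
        False := by
      intro hT47
      refine found _ hmems8 (by simp) hpar8 ⟨{x, t a (t b (t a x)), D}, ?_⟩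
      have hanotin : a ∉ ({x, t a (t b (t a x)), D} : Finset (Fin v)) := by
        simp only [Finset.mem_insert, Finset.mem_singleton]
        push_neg
        exact ⟨Ne.symm hxa, Ne.symm p4a, Ne.symm hDa⟩
      have hbnotin : b ∉ ({x, t a (t b (t a x)), D} : Finset (Fin v)) := by
        simp only [Finset.mem_insert, Finset.mem_singleton]
        push_neg
        exact ⟨Ne.symm hxb, Ne.symm p4b, Ne.symm hDb⟩
      have ne1 : ({x, t a (t b (t a x)), D} : Finset (Fin v)) ≠ {a, x, t a x} := by
        intro h; exact hanotin (by rw [h]; simp)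
      have ne2 : ({x, t a (t b (t a x)), D} : Finset (Fin v)) ≠ {b, t a x, t b (t a x)} := by
        intro h; exact hbnotin (by rw [h]; simp)
      have ne3 : ({x, t a (t b (t a x)), D} : Finset (Fin v)) ≠
          {a, t b (t a x), t a (t b (t a x))} := by
        intro h; exact hanotin (by rw [h]; simp)
      have ne5 : ({x, t a (t b (t a x)), D} : Finset (Fin v)) ≠ {a, z, t a z} := by
        intro h; exact hanotin (by rw [h]; simp)
      have ne6 : ({x, t a (t b (t a x)), D} : Finset (Fin v)) ≠ {b, t a z, t b (t a z)} := by
        intro h; exact hbnotin (by rw [h]; simp)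
      have ne8 : ({x, t a (t b (t a x)), D} : Finset (Fin v)) ≠ {a, D, y} := by
        intro h; exact hanotin (by rw [h]; simp)
      simp only [List.count_cons, List.count_nil, beq_iff_eq]
      rw [if_neg (Ne.symm ne1), if_neg (Ne.symm ne2), if_neg (Ne.symm ne3),
        if_neg (Ne.symm ne5), if_neg (Ne.symm ne6), if_neg (Ne.symm hT47),
        if_neg (Ne.symm ne8)]
      simp
    by_cases hbb : ({b, t a x, t b (t a x)} : Finset (Fin v)) = {b, t a z, t b (t a z)}
    · -- the two b-blocks coincide
      have h5 : t a z ∈ ({b, t a x, t b (t a x)} : Finset (Fin v)) := by rw [hbb]; simp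
      simp only [Finset.mem_insert, Finset.mem_singleton] at h5
      rcases h5 with haz | haz | haz
      · exact q2b haz
      · -- t a z = t a x, hence z = x
        have h6 := inva z hza
        rw [haz, inva x hxa] at h6
        -- h6 : x = z
        apply foundT4
        intro hT47
        have h7 : t a (t b (t a x)) ∈ ({z, t b (t a z), y} : Finset (Fin v)) := by
          rw [← hT47]; simp
        simp only [Finset.mem_insert, Finset.mem_singleton] at h7
        rcases h7 with h7 | h7 | h7
        · rw [← h6] at h7; exact p4x h7
        · rw [haz] at h7; exact p4p3 h7
        · have h8 : D ∈ ({z, t b (t a z), y} : Finset (Fin v)) := by rw [← hT47]; simp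
          simp only [Finset.mem_insert, Finset.mem_singleton] at h8
          rcases h8 with h8 | h8 | h8
          · rw [← h6] at h8; exact hDx h8
          · rw [haz] at h8; exact hDp3 h8
          · rw [← h8] at h7; exact hDp4 h7.symm
      · -- t a z = t b (t a x), hence z = t a (t b (t a x))
        have h6 := inva z hza
        rw [haz] at h6
        -- h6 : t a (t b (t a x)) = z
        have hbz : t b (t a z) = t a x := by rw [haz]; exact invb (t a x) p2b
        apply foundT4
        intro hT47
        have h7 : x ∈ ({z, t b (t a z), y} : Finset (Fin v)) := by rw [← hT47]; simp
        simp only [Finset.mem_insert, Finset.mem_singleton] at h7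
        rcases h7 with h7 | h7 | h7
        · rw [← h6] at h7; exact p4x h7.symm
        · rw [hbz] at h7; exact p2x h7.symm
        · have h8 : D ∈ ({z, t b (t a z), y} : Finset (Fin v)) := by rw [← hT47]; simp
          simp only [Finset.mem_insert, Finset.mem_singleton] at h8
          rcases h8 with h8 | h8 | h8
          · rw [← h6] at h8; exact hDp4 h8
          · rw [hbz] at h8; exact hDp2 h8
          · rw [← h8] at h7; exact hDx h7.symm
    · -- the b-blocks are distinct : the b-block of x occurs exactly once
      refine found _ hmems8 (by simp) hpar8 ⟨{b, t a x, t b (t a x)}, ?_⟩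
      have hbnotins : ∀ u1 u2 u3 : Fin v, u1 ≠ b → u2 ≠ b → u3 ≠ b →
          ({b, t a x, t b (t a x)} : Finset (Fin v)) ≠ {u1, u2, u3} := by
        intro u1 u2 u3 h1 h2 h3 h
        have hb' : b ∈ ({u1, u2, u3} : Finset (Fin v)) := by rw [← h]; simp
        simp only [Finset.mem_insert, Finset.mem_singleton] at hb'
        rcases hb' with h' | h' | h'
        exacts [h1 h'.symm, h2 h'.symm, h3 h'.symm]
      have ne1 := hbnotins a x (t a x) hab hxb p2b
      have ne3 := hbnotins a (t b (t a x)) (t a (t b (t a x))) hab p3b p4b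
      have ne4 := hbnotins x (t a (t b (t a x))) D hxb p4b hDb
      have ne5 := hbnotins a z (t a z) hab hzb q2b
      have ne7 := hbnotins z (t b (t a z)) y hzb q3b hyb
      have ne8 := hbnotins a D y hab hDb hyb
      simp only [List.count_cons, List.count_nil, beq_iff_eq]
      rw [if_neg (Ne.symm ne1), if_neg (Ne.symm ne3), if_neg (Ne.symm ne4),
        if_neg (Ne.symm ne5), if_neg (Ne.symm hbb), if_neg (Ne.symm ne7),
        if_neg (Ne.symm ne8)]
      simp
  -- Step H : the finale.  Pick any point x outside {a, b, c}; both the window of x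
  -- and the window of t a x have chord through c, giving an even configuration.
  obtain ⟨x, hx⟩ : ∃ x : Fin v, x ∉ ({a, b, c} : Finset (Fin v)) := by
    by_contra hcon
    push_neg at hcon
    have h1 : (Finset.univ : Finset (Fin v)).card ≤ ({a, b, c} : Finset (Fin v)).card :=
      Finset.card_le_card (fun u _ => hcon u)
    have h2 : ({a, b, c} : Finset (Fin v)).card ≤ 3 := by
      refine le_trans (Finset.card_insert_le _ _) ?_
      refine Nat.succ_le_succ (le_trans (Finset.card_insert_le _ _) ?_)
      simp
    rw [Finset.card_univ, Fintype.card_fin] at h1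
    omega
  simp only [Finset.mem_insert, Finset.mem_singleton] at hx
  push_neg at hx
  obtain ⟨hxa, hxb, hxc⟩ := hx
  obtain ⟨⟨p2a, p2b, p2c, p2x⟩, ⟨p3a, p3b, p3c, p3x, p3p2⟩,
    ⟨p4a, p4b, p4c, p4x, p4p2, p4p3⟩⟩ := pack x hxa hxb hxc
  have r3b := tne1 b x (Ne.symm hxb)
  have r3x := tne2 b x (Ne.symm hxb)
  have r3a := B2 x hxb hxc
  have r3c := B3 x hxa hxb
  have r4a := tne1 a (t b x) (Ne.symm r3a)
  have r4r3 := tne2 a (t b x) (Ne.symm r3a)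
  have r4b := A2 (t b x) r3a r3c
  have r4c := A3 (t b x) r3a r3b
  have r4tax : t a x ≠ t a (t b x) := by
    intro h
    have h6 := inva x hxa
    rw [h, inva (t b x) r3a] at h6
    exact r3x h6
  have hGx := stepG x hxa hxb hxc
  have hG2' : t (t a x) (t a (t b x)) = c := by
    have h7 := stepG (t a x) p2a p2b p2c
    rwa [inva x hxa] at h7
  refine found [({a, x, t a x} : Finset (Fin v)), {b, t a x, t b (t a x)},
    {a, t b (t a x), t a (t b (t a x))}, {x, t a (t b (t a x)), c},
    {a, x, t a x}, {b, x, t b x}, {a, t b x, t a (t b x)},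
    {t a x, t a (t b x), c}] ?_ (by simp) ?_ ?_
  · intro T hT
    simp only [List.mem_cons, List.not_mem_nil, or_false] at hT
    rcases hT with rfl | rfl | rfl | rfl | rfl | rfl | rfl | rfl
    · exact tmem a x (Ne.symm hxa)
    · exact tmem b (t a x) (Ne.symm p2b)
    · exact tmem a (t b (t a x)) (Ne.symm p3a)
    · rw [← hGx]; exact tmem x (t a (t b (t a x))) (Ne.symm p4x)
    · exact tmem a x (Ne.symm hxa)
    · exact tmem b x (Ne.symm hxb)
    · exact tmem a (t b x) (Ne.symm r3a)
    · rw [← hG2']; exact tmem (t a x) (t a (t b x)) r4tax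
  · intro p
    simp only [List.countP_cons, List.countP_nil, decide_eq_true_eq]
    rw [NoEightAux.indicator_triple p a x (t a x) (Ne.symm hxa) (Ne.symm p2a) (Ne.symm p2x),
      NoEightAux.indicator_triple p b (t a x) (t b (t a x)) (Ne.symm p2b) (Ne.symm p3b)
        (Ne.symm p3p2),
      NoEightAux.indicator_triple p a (t b (t a x)) (t a (t b (t a x))) (Ne.symm p3a)
        (Ne.symm p4a) (Ne.symm p4p3),
      NoEightAux.indicator_triple p x (t a (t b (t a x))) c (Ne.symm p4x) hxc p4c,
      NoEightAux.indicator_triple p b x (t b x) (Ne.symm hxb) (Ne.symm r3b) (Ne.symm r3x),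
      NoEightAux.indicator_triple p a (t b x) (t a (t b x)) (Ne.symm r3a) (Ne.symm r4a)
        (Ne.symm r4r3),
      NoEightAux.indicator_triple p (t a x) (t a (t b x)) c r4tax p2c r4c]
    omega
  · refine ⟨{b, t a x, t b (t a x)}, ?_⟩
    have hbnotins : ∀ u1 u2 u3 : Fin v, u1 ≠ b → u2 ≠ b → u3 ≠ b →
        ({b, t a x, t b (t a x)} : Finset (Fin v)) ≠ {u1, u2, u3} := by
      intro u1 u2 u3 h1 h2 h3 h
      have hb' : b ∈ ({u1, u2, u3} : Finset (Fin v)) := by rw [← h]; simp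
      simp only [Finset.mem_insert, Finset.mem_singleton] at hb'
      rcases hb' with h' | h' | h'
      exacts [h1 h'.symm, h2 h'.symm, h3 h'.symm]
    have ne1 := hbnotins a x (t a x) hab hxb p2b
    have ne3 := hbnotins a (t b (t a x)) (t a (t b (t a x))) hab p3b p4b
    have ne4 := hbnotins x (t a (t b (t a x))) c hxb p4b hcb
    have ne7 := hbnotins a (t b x) (t a (t b x)) hab r3b r4b
    have ne8 := hbnotins (t a x) (t a (t b x)) c p2b r4b hcb
    have ne6 : ({b, t a x, t b (t a x)} : Finset (Fin v)) ≠ {b, x, t b x} := by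
      intro h
      have hb' : t a x ∈ ({b, x, t b x} : Finset (Fin v)) := by rw [← h]; simp
      simp only [Finset.mem_insert, Finset.mem_singleton] at hb'
      rcases hb' with h' | h' | h'
      exacts [p2b h', p2x h', fg x hxa hxb hxc h']
    simp only [List.count_cons, List.count_nil, beq_iff_eq]
    rw [if_neg (Ne.symm ne1), if_neg (Ne.symm ne3), if_neg (Ne.symm ne4),
      if_neg (Ne.symm ne6), if_neg (Ne.symm ne7), if_neg (Ne.symm ne8)]
    simp
end
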